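/- arXiv:1110.4253 — 4 statements merged into one kernel-verified Lean document; each statement's English description precedes it below -/
import Mathlib

section
/- Let (a_n)_{n=1}^∞ be a sequence of scalars with L := Σ_{n=1}^∞ |a_n|² (log₂(n+1))² < ∞, and let (φ_n)_{n=1}^∞ be an orthonormal system in L₂(X, dμ; H) with fixed strongly measurable representatives. For each integer k ≥ 1 set S_k°(x) := max_{2^k ≤ j < 2^{k+1}} ‖Σ_{n=2^k}^j a_n φ_n(x)‖_H. Then Σ_{k=1}^∞ ∫_X (S_k°(x))² dμ(x) ≤ 4L, and consequently S_k°(x) → 0 as k → ∞ for μ-almost every x ∈ X. -/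
open MeasureTheory Filter
open scoped ENNReal NNReal BigOperators

section Helpers

lemma sq_biSup_le {g : ℕ → ℝ≥0∞} {s : Finset ℕ} {B : ℝ≥0∞}
    (h : ∀ j ∈ s, g j ^ 2 ≤ B) : (⨆ j ∈ s, g j) ^ 2 ≤ B := by
  rw [sq, ENNReal.iSup_mul]
  refine iSup_le fun i => ?_
  rw [ENNReal.iSup_mul]
  refine iSup_le fun hi => ?_
  rw [ENNReal.mul_iSup]
  refine iSup_le fun i' => ?_
  rw [ENNReal.mul_iSup]
  refine iSup_le fun hi' => ?_
  calc g i * g i' ≤ max (g i) (g i') * max (g i) (g i') := by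
        gcongr
        · exact le_max_left _ _
        · exact le_max_right _ _
    _ = max (g i) (g i') ^ 2 := (sq _).symm
    _ ≤ B := by
        rcases max_cases (g i) (g i') with ⟨he, _⟩ | ⟨he, _⟩ <;> rw [he]
        · exact h i hi
        · exact h i' hi'

lemma dyadic_decomp {H : Type*} [AddCommGroup H] (f : ℕ → H) (s m t : ℕ)
    (ht : t ≤ 2 ^ m) :
    ∑ n ∈ Finset.Ico s (s + t), f n
      = ∑ i ∈ Finset.range (m + 1),
          ∑ n ∈ Finset.Ico (s + t / 2 ^ (i+1) * 2 ^ (i+1)) (s + t / 2 ^ i * 2 ^ i), f n := by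
  set r : ℕ → ℕ := fun i => t / 2 ^ i * 2 ^ i with hr
  have hanti : ∀ i, r (i + 1) ≤ r i := by
    intro i
    show t / 2 ^ (i+1) * 2 ^ (i+1) ≤ t / 2 ^ i * 2 ^ i
    rw [pow_succ, ← Nat.div_div_eq_div_mul]
    calc t / 2 ^ i / 2 * (2 ^ i * 2) = t / 2 ^ i / 2 * 2 * 2 ^ i := by ring
      _ ≤ t / 2 ^ i * 2 ^ i := Nat.mul_le_mul_right _ (Nat.div_mul_le_self _ 2)
  have hr0 : r 0 = t := by simp [hr]
  have hle : ∀ i, r i ≤ t := by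
    intro i
    induction i with
    | zero => exact hr0.le
    | succ n ih => exact (hanti n).trans ih
  have claim : ∀ N, ∑ i ∈ Finset.range N, ∑ n ∈ Finset.Ico (s + r (i+1)) (s + r i), f n
      = ∑ n ∈ Finset.Ico (s + r N) (s + r 0), f n := by
    intro N
    induction N with
    | zero => simp
    | succ N ih =>
      rw [Finset.sum_range_succ, ih, add_comm]
      exact Finset.sum_Ico_consecutive f (by simpa using hanti N) (by simp [hr0]; exact hle N)
  have hrm : r (m + 1) = 0 := by
    have : t / 2 ^ (m+1) = 0 :=
      Nat.div_eq_of_lt (lt_of_le_of_lt ht (by exact Nat.pow_lt_pow_succ one_lt_two))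
    simp [hr, this]
  rw [claim (m+1), hrm, hr0]
  simp


lemma level_bound {H : Type*} [NormedAddCommGroup H] (f : ℕ → H) (s m t i : ℕ)
    (ht : t ≤ 2 ^ m) (hi : i ≤ m) :
    ‖∑ n ∈ Finset.Ico (s + t / 2 ^ (i+1) * 2 ^ (i+1)) (s + t / 2 ^ i * 2 ^ i), f n‖₊ ^ 2
      ≤ ∑ u ∈ Finset.range (2 ^ (m - i)),
          ‖∑ n ∈ Finset.Ico (s + u * 2 ^ i) (s + (u+1) * 2 ^ i), f n‖₊ ^ 2 := by
  set q := t / 2 ^ i with hq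
  have hdiv : t / 2 ^ (i+1) = q / 2 := by
    rw [hq, pow_succ, ← Nat.div_div_eq_div_mul]
  have hb : t / 2 ^ (i+1) * 2 ^ (i+1) = q / 2 * 2 * 2 ^ i := by
    rw [hdiv, pow_succ]; ring
  rcases Nat.even_or_odd q with he | ho
  · have : q / 2 * 2 = q := Nat.div_mul_cancel he.two_dvd
    rw [hb, this]
    simp
  · have hq1 : 1 ≤ q := ho.pos
    have hodd : q % 2 = 1 := Nat.odd_iff.mp ho
    have hdm := Nat.div_add_mod q 2
    have : q / 2 * 2 = q - 1 := by omega
    have hblock : t / 2 ^ (i+1) * 2 ^ (i+1) = (q - 1) * 2 ^ i := by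
      rw [hb, this]
    have hqle : q ≤ 2 ^ (m - i) := by
      have h1 : t / 2 ^ i ≤ 2 ^ m / 2 ^ i := Nat.div_le_div_right ht
      rwa [Nat.pow_div hi two_pos] at h1
    have hmem : q - 1 ∈ Finset.range (2 ^ (m - i)) := by
      simp only [Finset.mem_range]; omega
    have := Finset.single_le_sum
      (f := fun u => ‖∑ n ∈ Finset.Ico (s + u * 2 ^ i) (s + (u+1) * 2 ^ i), f n‖₊ ^ 2)
      (fun u _ => zero_le) hmem
    rw [hblock]
    have hq1' : q - 1 + 1 = q := by omega
    rw [← hq1'] at this ⊢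
    simpa using this

lemma pointwise_bound {H : Type*} [NormedAddCommGroup H] (f : ℕ → H) (s m j : ℕ)
    (h1 : s ≤ j) (h2 : j < s + 2 ^ m) :
    (‖∑ n ∈ Finset.Ico s (j+1), f n‖₊ : ℝ≥0∞) ^ 2
      ≤ (m+1) * ∑ i ∈ Finset.range (m+1), ∑ u ∈ Finset.range (2 ^ (m - i)),
          (‖∑ n ∈ Finset.Ico (s + u * 2 ^ i) (s + (u+1) * 2 ^ i), f n‖₊ : ℝ≥0∞) ^ 2 := by
  set t := j + 1 - s with hts
  have hst : s + t = j + 1 := by omega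
  have ht : t ≤ 2 ^ m := by omega
  have key : (‖∑ n ∈ Finset.Ico s (j+1), f n‖₊ : ℝ≥0) ^ 2
      ≤ (m+1) * ∑ i ∈ Finset.range (m+1), ∑ u ∈ Finset.range (2 ^ (m - i)),
          ‖∑ n ∈ Finset.Ico (s + u * 2 ^ i) (s + (u+1) * 2 ^ i), f n‖₊ ^ 2 := by
    calc ‖∑ n ∈ Finset.Ico s (j+1), f n‖₊ ^ 2
        ≤ (∑ i ∈ Finset.range (m+1),
            ‖∑ n ∈ Finset.Ico (s + t / 2 ^ (i+1) * 2 ^ (i+1)) (s + t / 2 ^ i * 2 ^ i), f n‖₊) ^ 2 := by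
          gcongr
          rw [← hst, dyadic_decomp f s m t ht]
          exact nnnorm_sum_le _ _
      _ ≤ (m+1) * ∑ i ∈ Finset.range (m+1),
            ‖∑ n ∈ Finset.Ico (s + t / 2 ^ (i+1) * 2 ^ (i+1)) (s + t / 2 ^ i * 2 ^ i), f n‖₊ ^ 2 := by
          have := sq_sum_le_card_mul_sum_sq (s := Finset.range (m+1))
            (f := fun i => (‖∑ n ∈ Finset.Ico (s + t / 2 ^ (i+1) * 2 ^ (i+1)) (s + t / 2 ^ i * 2 ^ i), f n‖₊ : ℝ))
          rw [← NNReal.coe_le_coe]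
          push_cast
          simpa using this
      _ ≤ (m+1) * ∑ i ∈ Finset.range (m+1), ∑ u ∈ Finset.range (2 ^ (m - i)),
            ‖∑ n ∈ Finset.Ico (s + u * 2 ^ i) (s + (u+1) * 2 ^ i), f n‖₊ ^ 2 := by
          gcongr with i hi
          exact level_bound f s m t i ht (by simpa using Nat.lt_succ_iff.mp (Finset.mem_range.mp hi))
  calc (‖∑ n ∈ Finset.Ico s (j+1), f n‖₊ : ℝ≥0∞) ^ 2
      = ((‖∑ n ∈ Finset.Ico s (j+1), f n‖₊ ^ 2 : ℝ≥0) : ℝ≥0∞) := by push_cast; ring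
    _ ≤ (((m+1) * ∑ i ∈ Finset.range (m+1), ∑ u ∈ Finset.range (2 ^ (m - i)),
          ‖∑ n ∈ Finset.Ico (s + u * 2 ^ i) (s + (u+1) * 2 ^ i), f n‖₊ ^ 2 : ℝ≥0) : ℝ≥0∞) := by
        exact_mod_cast ENNReal.coe_le_coe.mpr key
    _ = _ := by push_cast; ring

lemma partition_sum {β : Type*} [AddCommMonoid β] (h : ℕ → β) (s d M : ℕ) :
    ∑ u ∈ Finset.range M, ∑ n ∈ Finset.Ico (s + u * d) (s + (u+1) * d), h n
      = ∑ n ∈ Finset.Ico s (s + M * d), h n := by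
  induction M with
  | zero => simp
  | succ M ih =>
    rw [Finset.sum_range_succ, ih]
    exact Finset.sum_Ico_consecutive h (Nat.le_add_right _ _)
      (Nat.add_le_add_left (Nat.mul_le_mul_right d (by omega)) s)

lemma blocks_union {β : Type*} [AddCommMonoid β] (v : ℕ → β) (K : ℕ) :
    ∑ k ∈ Finset.range K, ∑ n ∈ Finset.Ico (2^(k+1)) (2^(k+2)), v n
      = ∑ n ∈ Finset.Ico 2 (2^(K+1)), v n := by
  induction K with
  | zero => norm_num
  | succ K ih =>
    rw [Finset.sum_range_succ, ih]
    exact Finset.sum_Ico_consecutive v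
      (by simpa using Nat.pow_le_pow_right (by norm_num) (by omega : 1 ≤ K+1))
      (Nat.pow_le_pow_right (by norm_num) (by omega))

lemma aemeas_bisup {X : Type*} [MeasurableSpace X] {μ : Measure X} (s : Finset ℕ)
    (g : ℕ → X → ℝ≥0∞) (hg : ∀ j ∈ s, AEMeasurable (g j) μ) :
    AEMeasurable (fun x => ⨆ j ∈ s, g j x) μ := by
  classical
  induction s using Finset.induction_on with
  | empty => simpa using aemeasurable_const
  | @insert b s hbs ih =>
    have he : (fun x => ⨆ j ∈ insert b s, g j x) = fun x => g b x ⊔ ⨆ j ∈ s, g j x := by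
      funext x
      simp [iSup_or, iSup_sup_eq]
    rw [he]
    exact (hg b (Finset.mem_insert_self _ _)).sup (ih fun j hj => hg j (Finset.mem_insert_of_mem hj))

lemma tendsto_of_sq {f : ℕ → ℝ≥0∞} (h : Tendsto (fun k => f k ^ 2) atTop (nhds 0)) :
    Tendsto f atTop (nhds 0) := by
  rw [ENNReal.tendsto_nhds_zero] at h ⊢
  intro ε hε
  have hδpos : (0:ℝ≥0∞) < min ε 1 := lt_min hε zero_lt_one
  have hδ2 : (0:ℝ≥0∞) < min ε 1 ^ 2 := ENNReal.pow_pos hδpos 2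
  filter_upwards [h _ hδ2] with k hk
  by_contra hcon
  push_neg at hcon
  have hlt : min ε 1 < f k := (min_le_left _ _).trans_lt hcon
  exact absurd hk (not_le.mpr (ENNReal.pow_lt_pow_left two_ne_zero hlt))

lemma memLp_integrable_inner {X : Type*} [MeasurableSpace X] {μ : Measure X} {𝕜 H : Type*}
    [RCLike 𝕜] [NormedAddCommGroup H] [InnerProductSpace 𝕜 H]
    {f g : X → H} (hf : MemLp f 2 μ) (hg : MemLp g 2 μ) :
    Integrable (fun x => (inner 𝕜 (f x) (g x) : 𝕜)) μ := by
  have h := MeasureTheory.L2.integrable_inner (𝕜 := 𝕜) (hf.toLp f) (hg.toLp g)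
  refine h.congr ?_
  filter_upwards [hf.coeFn_toLp, hg.coeFn_toLp] with x hx hy
  rw [hx, hy]

lemma block_integral {X : Type*} [MeasurableSpace X] (μ : Measure X)
    {𝕜 : Type*} [RCLike 𝕜]
    {H : Type*} [NormedAddCommGroup H] [InnerProductSpace 𝕜 H]
    (a : ℕ → 𝕜) (φ : ℕ → X → H)
    (hmem : ∀ n, 1 ≤ n → MemLp (φ n) 2 μ)
    (horth : ∀ n m, 1 ≤ n → 1 ≤ m →
      ∫ x, (inner 𝕜 (φ n x) (φ m x) : 𝕜) ∂μ = if n = m then (1 : 𝕜) else 0)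
    (s : Finset ℕ) (hs : ∀ n ∈ s, 1 ≤ n) :
    ∫⁻ x, (‖∑ n ∈ s, a n • φ n x‖₊ : ℝ≥0∞) ^ 2 ∂μ
      = ENNReal.ofReal (∑ n ∈ s, ‖a n‖ ^ 2) := by
  set g : X → H := fun x => ∑ n ∈ s, a n • φ n x with hg
  have hmem' : ∀ n ∈ s, MemLp (fun x => a n • φ n x) 2 μ :=
    fun n hn => (hmem n (hs n hn)).const_smul (a n)
  have hgmem : MemLp g 2 μ := by
    have h := memLp_finset_sum' s hmem'
    have he : (∑ i ∈ s, fun x => a i • φ i x) = g := by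
      funext x
      simp [hg, Finset.sum_apply]
    rwa [he] at h
  have hinn : Integrable (fun x => (inner 𝕜 (g x) (g x) : 𝕜)) μ :=
    memLp_integrable_inner hgmem hgmem
  -- compute the Bochner integral of the inner product
  have hterm : ∀ n ∈ s, ∀ m ∈ s, Integrable
      (fun x => (starRingEnd 𝕜 (a n) * a m) * (inner 𝕜 (φ n x) (φ m x) : 𝕜)) μ := by
    intro n hn m hm
    exact (memLp_integrable_inner (hmem n (hs n hn)) (hmem m (hs m hm))).const_mul _
  have hexp : ∀ x, (inner 𝕜 (g x) (g x) : 𝕜)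
      = ∑ n ∈ s, ∑ m ∈ s, (starRingEnd 𝕜 (a n) * a m) * (inner 𝕜 (φ n x) (φ m x) : 𝕜) := by
    intro x
    show (inner 𝕜 (∑ n ∈ s, a n • φ n x) (∑ m ∈ s, a m • φ m x) : 𝕜) = _
    rw [sum_inner]
    refine Finset.sum_congr rfl fun n hn => ?_
    rw [inner_sum]
    refine Finset.sum_congr rfl fun m hm => ?_
    rw [inner_smul_left, inner_smul_right]
    ring
  have hint : ∫ x, (inner 𝕜 (g x) (g x) : 𝕜) ∂μ = ((∑ n ∈ s, ‖a n‖ ^ 2 : ℝ) : 𝕜) := by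
    calc ∫ x, (inner 𝕜 (g x) (g x) : 𝕜) ∂μ
        = ∫ x, ∑ n ∈ s, ∑ m ∈ s, (starRingEnd 𝕜 (a n) * a m) * (inner 𝕜 (φ n x) (φ m x) : 𝕜) ∂μ := by
          simp_rw [hexp]
      _ = ∑ n ∈ s, ∑ m ∈ s, (starRingEnd 𝕜 (a n) * a m) * ∫ x, (inner 𝕜 (φ n x) (φ m x) : 𝕜) ∂μ := by
          rw [integral_finset_sum s (fun n hn => integrable_finset_sum s (fun m hm => hterm n hn m hm))]
          exact Finset.sum_congr rfl fun n hn => by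
            rw [integral_finset_sum s (fun m hm => hterm n hn m hm)]
            exact Finset.sum_congr rfl fun m hm => integral_const_mul _ _
      _ = ∑ n ∈ s, ∑ m ∈ s, (starRingEnd 𝕜 (a n) * a m) * (if n = m then (1:𝕜) else 0) := by
          refine Finset.sum_congr rfl fun n hn => Finset.sum_congr rfl fun m hm => ?_
          rw [horth n m (hs n hn) (hs m hm)]
      _ = ∑ n ∈ s, starRingEnd 𝕜 (a n) * a n := by
          refine Finset.sum_congr rfl fun n hn => ?_
          rw [Finset.sum_eq_single_of_mem n hn (fun m hm hne => by simp [Ne.symm hne])]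
          simp
      _ = ((∑ n ∈ s, ‖a n‖ ^ 2 : ℝ) : 𝕜) := by
          push_cast
          refine Finset.sum_congr rfl fun n _ => ?_
          rw [RCLike.conj_mul]
  -- now the real-valued integral
  have hnormsq : ∀ x, ‖g x‖ ^ 2 = RCLike.re (inner 𝕜 (g x) (g x) : 𝕜) := by
    intro x
    rw [← inner_self_eq_norm_sq (𝕜 := 𝕜)]
  have hreal : ∫ x, ‖g x‖ ^ 2 ∂μ = ∑ n ∈ s, ‖a n‖ ^ 2 := by
    calc ∫ x, ‖g x‖ ^ 2 ∂μ = ∫ x, RCLike.re (inner 𝕜 (g x) (g x) : 𝕜) ∂μ := by simp_rw [hnormsq]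
      _ = RCLike.re (∫ x, (inner 𝕜 (g x) (g x) : 𝕜) ∂μ) := integral_re hinn
      _ = ∑ n ∈ s, ‖a n‖ ^ 2 := by rw [hint, RCLike.ofReal_re]
  have hintsq : Integrable (fun x => ‖g x‖ ^ 2) μ := by
    refine (hinn.re.congr ?_)
    filter_upwards with x using (hnormsq x).symm
  rw [← hreal, MeasureTheory.ofReal_integral_eq_lintegral_ofReal hintsq
    (Filter.Eventually.of_forall fun x => sq_nonneg _)]
  refine lintegral_congr fun x => ?_
  rw [← enorm_eq_nnnorm, ← ofReal_norm, ← ENNReal.ofReal_pow (norm_nonneg _)]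

end Helpers

/-- Bound on the dyadic oscillation maxima S_k° and their a.e. convergence to zero. -/
theorem dyadic_oscillation_bound
    {X : Type*} [MeasurableSpace X] (μ : Measure X)
    {𝕜 : Type*} [RCLike 𝕜]
    {H : Type*} [NormedAddCommGroup H] [InnerProductSpace 𝕜 H] [CompleteSpace H]
    (a : ℕ → 𝕜) (φ : ℕ → X → H)
    (hmem : ∀ n, 1 ≤ n → MemLp (φ n) 2 μ)
    (horth : ∀ n m, 1 ≤ n → 1 ≤ m →
      ∫ x, (inner 𝕜 (φ n x) (φ m x) : 𝕜) ∂μ = if n = m then (1 : 𝕜) else 0)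
    (hL : Summable fun n : ℕ => ‖a (n + 1)‖ ^ 2 * (Real.logb 2 ((n : ℝ) + 2)) ^ 2) :
    (∑' k : ℕ, ∫⁻ x,
        (⨆ j ∈ Finset.Icc (2 ^ (k + 1)) (2 ^ (k + 2) - 1),
          (‖∑ n ∈ Finset.Icc (2 ^ (k + 1)) j, a n • φ n x‖₊ : ℝ≥0∞)) ^ 2 ∂μ)
      ≤ ENNReal.ofReal
          (4 * ∑' n : ℕ, ‖a (n + 1)‖ ^ 2 * (Real.logb 2 ((n : ℝ) + 2)) ^ 2) ∧
    ∀ᵐ x ∂μ, Tendsto (fun k : ℕ =>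
        ⨆ j ∈ Finset.Icc (2 ^ k) (2 ^ (k + 1) - 1),
          (‖∑ n ∈ Finset.Icc (2 ^ k) j, a n • φ n x‖₊ : ℝ≥0∞))
      atTop (nhds (0 : ℝ≥0∞)) := by
  classical
  -- measurability of block sums
  have hsm : ∀ (s : Finset ℕ), (∀ n ∈ s, 1 ≤ n) →
      AEStronglyMeasurable (fun x => ∑ n ∈ s, a n • φ n x) μ := fun s hs =>
    Finset.aestronglyMeasurable_fun_sum s fun n hn => ((hmem n (hs n hn)).1.const_smul _)
  have hone : ∀ k : ℕ, (1:ℕ) ≤ 2 ^ (k+1) := fun k => Nat.one_le_two_pow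
  -- Step A: the per-k bound
  have hA : ∀ k : ℕ, (∫⁻ x,
      (⨆ j ∈ Finset.Icc (2 ^ (k + 1)) (2 ^ (k + 2) - 1),
        (‖∑ n ∈ Finset.Icc (2 ^ (k + 1)) j, a n • φ n x‖₊ : ℝ≥0∞)) ^ 2 ∂μ)
      ≤ ((k : ℝ≥0∞) + 2) ^ 2 *
        ENNReal.ofReal (∑ n ∈ Finset.Ico (2 ^ (k + 1)) (2 ^ (k + 2)), ‖a n‖ ^ 2) := by
    intro k
    have h2m : (2:ℕ) ^ (k+1) + 2 ^ (k+1) = 2 ^ (k+2) := by ring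
    have hcast : (((k+1:ℕ) : ℝ≥0∞) + 1) = (k : ℝ≥0∞) + 2 := by push_cast; ring
    -- pointwise bound
    have hpt : ∀ x, (⨆ j ∈ Finset.Icc (2 ^ (k + 1)) (2 ^ (k + 2) - 1),
        (‖∑ n ∈ Finset.Icc (2 ^ (k + 1)) j, a n • φ n x‖₊ : ℝ≥0∞)) ^ 2
        ≤ ((k : ℝ≥0∞) + 2) * ∑ i ∈ Finset.range (k + 2), ∑ u ∈ Finset.range (2 ^ (k + 1 - i)),
            (‖∑ n ∈ Finset.Ico (2 ^ (k+1) + u * 2 ^ i) (2 ^ (k+1) + (u+1) * 2 ^ i),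
              a n • φ n x‖₊ : ℝ≥0∞) ^ 2 := by
      intro x
      refine sq_biSup_le fun j hj => ?_
      obtain ⟨hj1, hj2⟩ := Finset.mem_Icc.mp hj
      have h1 : (1:ℕ) ≤ 2 ^ (k+2) := Nat.one_le_two_pow
      have hj2' : j < 2 ^ (k+1) + 2 ^ (k+1) := by omega
      have hpb := pointwise_bound (fun n => a n • φ n x) (2 ^ (k+1)) (k+1) j hj1 hj2'
      rw [Finset.Ico_add_one_right_eq_Icc, hcast] at hpb
      exact hpb
    -- integrate
    have hblkMeas : ∀ i u : ℕ, AEMeasurable (fun x =>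
        (‖∑ n ∈ Finset.Ico (2 ^ (k+1) + u * 2 ^ i) (2 ^ (k+1) + (u+1) * 2 ^ i),
          a n • φ n x‖₊ : ℝ≥0∞) ^ 2) μ := by
      intro i u
      refine ((hsm _ ?_).enorm).pow_const 2
      intro n hn
      have := (Finset.mem_Ico.mp hn).1
      have := hone k
      omega
    have hint : (∫⁻ x, ((k : ℝ≥0∞) + 2) * ∑ i ∈ Finset.range (k + 2),
          ∑ u ∈ Finset.range (2 ^ (k + 1 - i)),
            (‖∑ n ∈ Finset.Ico (2 ^ (k+1) + u * 2 ^ i) (2 ^ (k+1) + (u+1) * 2 ^ i),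
              a n • φ n x‖₊ : ℝ≥0∞) ^ 2 ∂μ)
        = ((k : ℝ≥0∞) + 2) * ∑ i ∈ Finset.range (k + 2),
            ∑ u ∈ Finset.range (2 ^ (k + 1 - i)),
              ∫⁻ x, (‖∑ n ∈ Finset.Ico (2 ^ (k+1) + u * 2 ^ i) (2 ^ (k+1) + (u+1) * 2 ^ i),
                a n • φ n x‖₊ : ℝ≥0∞) ^ 2 ∂μ := by
      rw [lintegral_const_mul' _ _ (by finiteness)]
      congr 1
      rw [lintegral_finset_sum' _ (fun i _ =>
        Finset.aemeasurable_fun_sum _ (fun u _ => hblkMeas i u))]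
      refine Finset.sum_congr rfl fun i _ => ?_
      exact lintegral_finset_sum' _ (fun u _ => hblkMeas i u)
    have hval : ∀ i ∈ Finset.range (k+2), (∑ u ∈ Finset.range (2 ^ (k + 1 - i)),
        ∫⁻ x, (‖∑ n ∈ Finset.Ico (2 ^ (k+1) + u * 2 ^ i) (2 ^ (k+1) + (u+1) * 2 ^ i),
          a n • φ n x‖₊ : ℝ≥0∞) ^ 2 ∂μ)
        = ENNReal.ofReal (∑ n ∈ Finset.Ico (2 ^ (k+1)) (2 ^ (k+2)), ‖a n‖ ^ 2) := by
      intro i hi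
      have hi' : i ≤ k + 1 := by have := Finset.mem_range.mp hi; omega
      have hcover : (2:ℕ) ^ (k+1) + 2 ^ (k + 1 - i) * 2 ^ i = 2 ^ (k+2) := by
        rw [← pow_add, Nat.sub_add_cancel hi']
        exact h2m
      calc (∑ u ∈ Finset.range (2 ^ (k + 1 - i)),
            ∫⁻ x, (‖∑ n ∈ Finset.Ico (2 ^ (k+1) + u * 2 ^ i) (2 ^ (k+1) + (u+1) * 2 ^ i),
              a n • φ n x‖₊ : ℝ≥0∞) ^ 2 ∂μ)
          = ∑ u ∈ Finset.range (2 ^ (k + 1 - i)), ENNReal.ofReal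
              (∑ n ∈ Finset.Ico (2 ^ (k+1) + u * 2 ^ i) (2 ^ (k+1) + (u+1) * 2 ^ i), ‖a n‖ ^ 2) := by
            refine Finset.sum_congr rfl fun u _ => ?_
            refine block_integral μ a φ hmem horth _ fun n hn => ?_
            have := (Finset.mem_Ico.mp hn).1
            have := hone k
            omega
        _ = ENNReal.ofReal (∑ u ∈ Finset.range (2 ^ (k + 1 - i)),
              ∑ n ∈ Finset.Ico (2 ^ (k+1) + u * 2 ^ i) (2 ^ (k+1) + (u+1) * 2 ^ i), ‖a n‖ ^ 2) :=
            (ENNReal.ofReal_sum_of_nonneg fun u _ =>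
              Finset.sum_nonneg fun n _ => sq_nonneg _).symm
        _ = ENNReal.ofReal (∑ n ∈ Finset.Ico (2 ^ (k+1)) (2 ^ (k+2)), ‖a n‖ ^ 2) := by
            rw [partition_sum, hcover]
    calc (∫⁻ x, (⨆ j ∈ Finset.Icc (2 ^ (k + 1)) (2 ^ (k + 2) - 1),
          (‖∑ n ∈ Finset.Icc (2 ^ (k + 1)) j, a n • φ n x‖₊ : ℝ≥0∞)) ^ 2 ∂μ)
        ≤ ∫⁻ x, ((k : ℝ≥0∞) + 2) * ∑ i ∈ Finset.range (k + 2),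
            ∑ u ∈ Finset.range (2 ^ (k + 1 - i)),
              (‖∑ n ∈ Finset.Ico (2 ^ (k+1) + u * 2 ^ i) (2 ^ (k+1) + (u+1) * 2 ^ i),
                a n • φ n x‖₊ : ℝ≥0∞) ^ 2 ∂μ := lintegral_mono hpt
      _ = ((k : ℝ≥0∞) + 2) * ∑ i ∈ Finset.range (k + 2),
            ∑ u ∈ Finset.range (2 ^ (k + 1 - i)),
              ∫⁻ x, (‖∑ n ∈ Finset.Ico (2 ^ (k+1) + u * 2 ^ i) (2 ^ (k+1) + (u+1) * 2 ^ i),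
                a n • φ n x‖₊ : ℝ≥0∞) ^ 2 ∂μ := hint
      _ = ((k : ℝ≥0∞) + 2) * ∑ i ∈ Finset.range (k + 2),
            ENNReal.ofReal (∑ n ∈ Finset.Ico (2 ^ (k+1)) (2 ^ (k+2)), ‖a n‖ ^ 2) := by
          rw [Finset.sum_congr rfl hval]
      _ = ((k : ℝ≥0∞) + 2) ^ 2 *
            ENNReal.ofReal (∑ n ∈ Finset.Ico (2 ^ (k + 1)) (2 ^ (k + 2)), ‖a n‖ ^ 2) := by
          rw [Finset.sum_const, Finset.card_range, nsmul_eq_mul]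
          push_cast
          ring
  -- Step B : comparison with the weighted series
  have hB1 : ∀ k : ℕ, ((k : ℝ≥0∞) + 2) ^ 2 *
      ENNReal.ofReal (∑ n ∈ Finset.Ico (2 ^ (k + 1)) (2 ^ (k + 2)), ‖a n‖ ^ 2)
      ≤ ∑ n ∈ Finset.Ico (2 ^ (k + 1)) (2 ^ (k + 2)),
          ENNReal.ofReal (4 * (‖a n‖ ^ 2 * (Real.logb 2 ((n : ℝ) + 1)) ^ 2)) := by
    intro k
    have hc : ((k : ℝ≥0∞) + 2) ^ 2 = ENNReal.ofReal (((k : ℝ) + 2) ^ 2) := by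
      rw [show ((k : ℝ≥0∞) + 2) = ((k + 2 : ℕ) : ℝ≥0∞) by push_cast; ring,
        ← ENNReal.ofReal_natCast (k+2), ← ENNReal.ofReal_pow (by positivity)]
      push_cast
      ring_nf
    rw [hc, ← ENNReal.ofReal_mul (by positivity),
      ← ENNReal.ofReal_sum_of_nonneg (fun n _ => by positivity)]
    refine ENNReal.ofReal_le_ofReal ?_
    rw [Finset.mul_sum]
    refine Finset.sum_le_sum fun n hn => ?_
    obtain ⟨h1, _⟩ := Finset.mem_Ico.mp hn
    have hn2 : (2:ℝ) ^ (k+1) ≤ (n:ℝ) := by exact_mod_cast Nat.cast_le.mpr h1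
    have hlog : (k:ℝ) + 1 ≤ Real.logb 2 ((n:ℝ) + 1) := by
      have h2 : (2:ℝ) ^ (k+1) ≤ (n:ℝ) + 1 := by linarith
      have h3 : Real.logb 2 ((2:ℝ) ^ (k+1)) ≤ Real.logb 2 ((n:ℝ) + 1) :=
        Real.logb_le_logb_of_le (by norm_num) (by positivity) h2
      rwa [Real.logb_pow, Real.logb_self_eq_one (by norm_num), mul_one, Nat.cast_add,
        Nat.cast_one] at h3
    have hk0 : (0:ℝ) ≤ (k:ℝ) + 1 := by positivity
    have hsq : ((k:ℝ) + 1) ^ 2 ≤ (Real.logb 2 ((n:ℝ) + 1)) ^ 2 := by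
      exact pow_le_pow_left₀ hk0 hlog 2
    nlinarith [sq_nonneg (‖a n‖), mul_le_mul_of_nonneg_left hsq (sq_nonneg (‖a n‖)),
      mul_nonneg (sq_nonneg (‖a n‖)) (mul_nonneg (Nat.cast_nonneg k) (Nat.cast_nonneg k)),
      mul_nonneg (sq_nonneg (‖a n‖)) (Nat.cast_nonneg (α := ℝ) k)]
  -- the weighted tail series
  have hofr : ENNReal.ofReal (4 * ∑' n : ℕ, ‖a (n + 1)‖ ^ 2 * (Real.logb 2 ((n : ℝ) + 2)) ^ 2)
      = ∑' n : ℕ, ENNReal.ofReal (4 * (‖a (n + 1)‖ ^ 2 * (Real.logb 2 (((n+1 : ℕ) : ℝ) + 1)) ^ 2)) := by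
    rw [← tsum_mul_left, ENNReal.ofReal_tsum_of_nonneg (fun n => by positivity) (hL.mul_left 4)]
    refine tsum_congr fun n => ?_
    congr 1
    push_cast
    ring
  have hB2 : (∑' k : ℕ, ∑ n ∈ Finset.Ico (2 ^ (k + 1)) (2 ^ (k + 2)),
        ENNReal.ofReal (4 * (‖a n‖ ^ 2 * (Real.logb 2 ((n : ℝ) + 1)) ^ 2)))
      ≤ ENNReal.ofReal (4 * ∑' n : ℕ, ‖a (n + 1)‖ ^ 2 * (Real.logb 2 ((n : ℝ) + 2)) ^ 2) := by
    rw [hofr]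
    rw [ENNReal.tsum_eq_iSup_sum]
    refine iSup_le fun s => ?_
    obtain ⟨K, hK⟩ := s.exists_nat_subset_range
    refine le_trans (Finset.sum_le_sum_of_subset hK) ?_
    rw [blocks_union]
    refine le_trans (Finset.sum_le_sum_of_subset
      (Finset.Ico_subset_Ico (by norm_num : (1:ℕ) ≤ 2) le_rfl)) ?_
    rw [Finset.sum_Ico_eq_sum_range]
    have hre : ∀ i : ℕ, ENNReal.ofReal
        (4 * (‖a (1 + i)‖ ^ 2 * (Real.logb 2 (((1 + i : ℕ)) + 1 : ℝ)) ^ 2))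
        = ENNReal.ofReal (4 * (‖a (i + 1)‖ ^ 2 * (Real.logb 2 (((i + 1 : ℕ) : ℝ) + 1)) ^ 2)) := by
      intro i
      rw [add_comm 1 i]
    simp_rw [hre]
    exact ENNReal.sum_le_tsum _
  have hpart1 : (∑' k : ℕ, ∫⁻ x,
        (⨆ j ∈ Finset.Icc (2 ^ (k + 1)) (2 ^ (k + 2) - 1),
          (‖∑ n ∈ Finset.Icc (2 ^ (k + 1)) j, a n • φ n x‖₊ : ℝ≥0∞)) ^ 2 ∂μ)
      ≤ ENNReal.ofReal
          (4 * ∑' n : ℕ, ‖a (n + 1)‖ ^ 2 * (Real.logb 2 ((n : ℝ) + 2)) ^ 2) :=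
    le_trans (ENNReal.tsum_le_tsum fun k => (hA k).trans (hB1 k)) hB2
  refine ⟨hpart1, ?_⟩
  -- Step C : a.e. convergence
  have hFmeas : ∀ k : ℕ, AEMeasurable (fun x =>
      (⨆ j ∈ Finset.Icc (2 ^ (k + 1)) (2 ^ (k + 2) - 1),
        (‖∑ n ∈ Finset.Icc (2 ^ (k + 1)) j, a n • φ n x‖₊ : ℝ≥0∞)) ^ 2) μ := by
    intro k
    refine AEMeasurable.pow_const ?_ 2
    refine aemeas_bisup _ _ fun j hj => ?_
    refine (hsm _ fun n hn => ?_).enorm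
    have := (Finset.mem_Icc.mp hn).1
    have := hone k
    omega
  have hfin : (∫⁻ x, ∑' k : ℕ,
      (⨆ j ∈ Finset.Icc (2 ^ (k + 1)) (2 ^ (k + 2) - 1),
        (‖∑ n ∈ Finset.Icc (2 ^ (k + 1)) j, a n • φ n x‖₊ : ℝ≥0∞)) ^ 2 ∂μ) ≠ ⊤ := by
    rw [lintegral_tsum hFmeas]
    exact ne_top_of_le_ne_top ENNReal.ofReal_ne_top hpart1
  have hae := ae_lt_top' (AEMeasurable.ennreal_tsum hFmeas) hfin
  filter_upwards [hae] with x hx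
  have h0 : Tendsto (fun k : ℕ =>
      (⨆ j ∈ Finset.Icc (2 ^ (k + 1)) (2 ^ (k + 2) - 1),
        (‖∑ n ∈ Finset.Icc (2 ^ (k + 1)) j, a n • φ n x‖₊ : ℝ≥0∞)) ^ 2)
      atTop (nhds 0) := ENNReal.tendsto_atTop_zero_of_tsum_ne_top hx.ne
  have h1 := tendsto_of_sq h0
  exact (tendsto_add_atTop_iff_nat 1).mp h1
end

section
/- Let (a_n)_{n=1}^∞ be a sequence of scalars with a_1 = a_2 = 0, let (φ_n)_{n=1}^∞ be an orthonormal system in L₂(X, dμ; H) with fixed strongly measurable representatives, let σ be a permutation of ℕ, and fix an integer k ≥ 0. Set ν_k := 2^{2^k}, M_k := {j ∈ ℕ : ν_k + 1 ≤ j ≤ ν_{k+1}}, and δ_k(x) := sup_{1 ≤ p ≤ q < ∞} ‖Σ_{n=p}^{q}, with the sum restricted to indices n for which σ(n) ∈ M_k, a_{σ(n)} φ_{σ(n)}(x)‖_H. Then (∫_X δ_k(x)² dμ(x))^{1/2} ≤ 8 ( Σ_{n=ν_k+1}^{ν_{k+1}} |a_n|² (log₂ n)² )^{1/2}. -/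
open MeasureTheory Filter
open scoped ENNReal NNReal BigOperators

lemma aux_downset_eq_range (A : Finset ℕ) (h : ∀ a ∈ A, ∀ b, b ≤ a → b ∈ A) :
    A = Finset.range A.card := by
  refine Finset.eq_of_subset_of_card_le (fun a ha => Finset.mem_range.2 ?_) (by simp)
  have hsub : Finset.range (a + 1) ⊆ A := fun b hb =>
    h a ha b (Nat.lt_succ_iff.1 (Finset.mem_range.1 hb))
  simpa using Finset.card_le_card hsub

lemma aux_sq_sum_le (m : ℕ) (c : ℕ → ℝ≥0) :
    (∑ r ∈ Finset.range m, c r) ^ 2 ≤ (m : ℝ≥0) * ∑ r ∈ Finset.range m, c r ^ 2 := by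
  have h := Finset.sum_mul_sq_le_sq_mul_sq (Finset.range m) (fun _ => (1 : ℝ≥0)) c
  simpa using h

lemma aux_sum_blocks {M : Type*} [AddCommMonoid M] (w : ℕ → M) (cγ : ℕ) :
    ∀ m : ℕ, ∑ i ∈ Finset.range m, ∑ l ∈ Finset.Ico (i * cγ) (i * cγ + cγ), w l
      = ∑ l ∈ Finset.range (m * cγ), w l := by
  intro m
  induction m with
  | zero => simp
  | succ m ih =>
      rw [Finset.sum_range_succ, ih, Finset.range_eq_Ico,
        (by ring : m * cγ + cγ = (m + 1) * cγ)]
      rw [Finset.range_eq_Ico]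
      exact Finset.sum_Ico_consecutive w (Nat.zero_le _) (Nat.mul_le_mul_right cγ (Nat.le_add_right m 1))

set_option linter.unnecessarySeqFocus false in
lemma aux_chain {H : Type*} [NormedAddCommGroup H] :
    ∀ (h : ℕ) (f : ℕ → H) (j : ℕ), j < 2 ^ h →
    ∃ c : ℕ → ℝ≥0,
      (‖∑ l ∈ Finset.range j, f l‖₊ ≤ ∑ r ∈ Finset.range h, c r) ∧
      ∀ r < h, c r ^ 2 ≤ ∑ i ∈ Finset.range (2 ^ (h - r)),
        ‖∑ l ∈ Finset.Ico (i * 2 ^ r) (i * 2 ^ r + 2 ^ r), f l‖₊ ^ 2 := by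
  intro h
  induction h with
  | zero =>
      intro f j hj
      interval_cases j
      exact ⟨fun _ => 0, by simp, by omega⟩
  | succ h ih =>
      intro f j hj
      rcases lt_or_ge j (2 ^ h) with hj' | hj'
      · obtain ⟨c, hc1, hc2⟩ := ih f j hj'
        refine ⟨fun r => if r < h then c r else 0, ?_, ?_⟩
        · calc ‖∑ l ∈ Finset.range j, f l‖₊ ≤ ∑ r ∈ Finset.range h, c r := hc1
            _ = ∑ r ∈ Finset.range (h + 1), if r < h then c r else 0 := by
                rw [Finset.sum_range_succ, if_neg (lt_irrefl h), add_zero]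
                exact (Finset.sum_congr rfl fun r hr => by
                  rw [if_pos (Finset.mem_range.1 hr)]).symm
        · intro r hr
          by_cases hrh : r < h
          · simp only [if_pos hrh]
            refine (hc2 r hrh).trans (Finset.sum_le_sum_of_subset ?_)
            exact Finset.range_subset_range.2 (Nat.pow_le_pow_right (by norm_num) (by omega))
          · simp [if_neg hrh]
      · set j' := j - 2 ^ h with hj'def
        have hj'lt : j' < 2 ^ h := by
          have : j < 2 ^ (h + 1) := hj
          simp only [pow_succ] at this; omega
        obtain ⟨c, hc1, hc2⟩ := ih (fun l => f (l + 2 ^ h)) j' hj'lt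
        refine ⟨fun r => if r < h then c r
          else if r = h then ‖∑ l ∈ Finset.range (2 ^ h), f l‖₊ else 0, ?_, ?_⟩
        · have hsplit : ∑ l ∈ Finset.range j, f l
              = ∑ l ∈ Finset.range (2 ^ h), f l + ∑ l ∈ Finset.range j', f (l + 2 ^ h) := by
            rw [Finset.range_eq_Ico, ← Finset.sum_Ico_consecutive f (Nat.zero_le (2 ^ h)) hj',
              ← Finset.range_eq_Ico, Finset.sum_Ico_eq_sum_range]
            simp only [hj'def, add_comm]
          rw [hsplit, Finset.sum_range_succ, if_neg (lt_irrefl h), if_pos rfl]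
          calc ‖∑ l ∈ Finset.range (2 ^ h), f l + ∑ l ∈ Finset.range j', f (l + 2 ^ h)‖₊
              ≤ ‖∑ l ∈ Finset.range (2 ^ h), f l‖₊ + ‖∑ l ∈ Finset.range j', f (l + 2 ^ h)‖₊ :=
                nnnorm_add_le _ _
            _ ≤ ‖∑ l ∈ Finset.range (2 ^ h), f l‖₊ + ∑ r ∈ Finset.range h, c r := by
                gcongr
            _ = (∑ r ∈ Finset.range h, if r < h then c r
                  else if r = h then ‖∑ l ∈ Finset.range (2 ^ h), f l‖₊ else 0)
                + ‖∑ l ∈ Finset.range (2 ^ h), f l‖₊ := by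
                rw [add_comm]
                congr 1
                exact (Finset.sum_congr rfl fun r hr => by
                  rw [if_pos (Finset.mem_range.1 hr)]).symm
        · intro r hr
          by_cases hrh : r < h
          · simp only [if_pos hrh]
            refine (hc2 r hrh).trans ?_
            have hshift : ∀ i : ℕ,
                (∑ l ∈ Finset.Ico (i * 2 ^ r) (i * 2 ^ r + 2 ^ r), f (l + 2 ^ h))
                  = ∑ l ∈ Finset.Ico ((i + 2 ^ (h - r)) * 2 ^ r)
                      ((i + 2 ^ (h - r)) * 2 ^ r + 2 ^ r), f l := by
              intro i
              rw [Finset.sum_Ico_eq_sum_range, Finset.sum_Ico_eq_sum_range]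
              have h2 : 2 ^ (h - r) * 2 ^ r = 2 ^ h := by
                rw [← pow_add]; congr 1; omega
              refine Finset.sum_congr (by congr 1 <;> omega) fun l _ => by
                congr 1; rw [add_mul]; omega
            calc ∑ i ∈ Finset.range (2 ^ (h - r)),
                  ‖∑ l ∈ Finset.Ico (i * 2 ^ r) (i * 2 ^ r + 2 ^ r), f (l + 2 ^ h)‖₊ ^ 2
                = ∑ i ∈ Finset.range (2 ^ (h - r)),
                    ‖∑ l ∈ Finset.Ico ((i + 2 ^ (h - r)) * 2 ^ r)
                      ((i + 2 ^ (h - r)) * 2 ^ r + 2 ^ r), f l‖₊ ^ 2 := by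
                  exact Finset.sum_congr rfl fun i _ => by rw [hshift]
              _ = ∑ i ∈ Finset.Ico (2 ^ (h - r)) (2 ^ (h - r) + 2 ^ (h - r)),
                    ‖∑ l ∈ Finset.Ico (i * 2 ^ r) (i * 2 ^ r + 2 ^ r), f l‖₊ ^ 2 := by
                  conv_rhs => rw [Finset.sum_Ico_eq_sum_range]
                  refine Finset.sum_congr (by rw [Nat.add_sub_cancel]) fun i _ => ?_
                  rw [add_comm i (2 ^ (h - r))]
              _ ≤ ∑ i ∈ Finset.range (2 ^ (h + 1 - r)),
                    ‖∑ l ∈ Finset.Ico (i * 2 ^ r) (i * 2 ^ r + 2 ^ r), f l‖₊ ^ 2 := by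
                  refine Finset.sum_le_sum_of_subset fun i hi => ?_
                  simp only [Finset.mem_Ico, Finset.mem_range] at *
                  have : 2 ^ (h - r) + 2 ^ (h - r) ≤ 2 ^ (h + 1 - r) := by
                    rw [← two_mul, ← pow_succ']
                    exact Nat.pow_le_pow_right (by norm_num) (by omega)
                  omega
          · have hrh' : r = h := by omega
            simp only [if_neg hrh, if_pos hrh']
            rw [hrh']
            have h1 : (2 : ℕ) ^ (h + 1 - h) = 2 := by
              have h2 : h + 1 - h = 1 := by omega
              rw [h2, pow_one]
            rw [h1]
            have h0 : ‖∑ l ∈ Finset.range (2 ^ h), f l‖₊ ^ 2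
                = ‖∑ l ∈ Finset.Ico (0 * 2 ^ h) (0 * 2 ^ h + 2 ^ h), f l‖₊ ^ 2 := by
              congr 2
              rw [Finset.range_eq_Ico]
              norm_num
            rw [h0, Finset.sum_range_succ, Finset.sum_range_one]
            exact le_add_right le_rfl

section
variable {X : Type*} [MeasurableSpace X] {μ : Measure X}
variable {𝕜 : Type*} [RCLike 𝕜]
variable {H : Type*} [NormedAddCommGroup H] [InnerProductSpace 𝕜 H]

lemma aux_integrable_inner {f g : X → H} (hf : MemLp f 2 μ) (hg : MemLp g 2 μ) :
    Integrable (fun x => (inner 𝕜 (f x) (g x) : 𝕜)) μ := by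
  refine Integrable.mono' (g := fun x => (‖f x‖ ^ 2 + ‖g x‖ ^ 2) / 2) ?_ ?_ ?_
  · exact (((memLp_two_iff_integrable_sq_norm hf.1).mp hf).add
      ((memLp_two_iff_integrable_sq_norm hg.1).mp hg)).div_const 2
  · exact hf.1.inner hg.1
  · refine Filter.Eventually.of_forall fun x => ?_
    calc ‖(inner 𝕜 (f x) (g x) : 𝕜)‖ ≤ ‖f x‖ * ‖g x‖ := norm_inner_le_norm _ _
      _ ≤ (‖f x‖ ^ 2 + ‖g x‖ ^ 2) / 2 := by nlinarith [sq_nonneg (‖f x‖ - ‖g x‖)]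

lemma aux_integral_norm_sq_sum (f : ℕ → X → H) (w : ℕ → ℝ)
    (hf : ∀ l, MemLp (f l) 2 μ)
    (ho : ∀ l l', ∫ x, (inner 𝕜 (f l x) (f l' x) : 𝕜) ∂μ
      = if l = l' then ((w l : ℝ) : 𝕜) else 0)
    (s : Finset ℕ) :
    ∫ x, ‖∑ l ∈ s, f l x‖ ^ 2 ∂μ = ∑ l ∈ s, w l := by
  have hint : ∀ l l', Integrable (fun x => (inner 𝕜 (f l x) (f l' x) : 𝕜)) μ :=
    fun l l' => aux_integrable_inner (hf l) (hf l')
  have h1 : ∀ x, ‖∑ l ∈ s, f l x‖ ^ 2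
      = ∑ l ∈ s, ∑ l' ∈ s, RCLike.re (inner 𝕜 (f l x) (f l' x) : 𝕜) := by
    intro x
    rw [← inner_self_eq_norm_sq (𝕜 := 𝕜), sum_inner]
    rw [map_sum]
    refine Finset.sum_congr rfl fun l _ => ?_
    rw [inner_sum, map_sum]
  simp_rw [h1]
  rw [integral_finset_sum _ fun l _ => integrable_finset_sum _ fun l' _ => (hint l l').re]
  refine Finset.sum_congr rfl fun l hl => ?_
  rw [integral_finset_sum _ fun l' _ => (hint l l').re]
  have h2 : ∀ l', ∫ x, RCLike.re (inner 𝕜 (f l x) (f l' x) : 𝕜) ∂μ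
      = if l = l' then w l else 0 := by
    intro l'
    rw [integral_re (hint l l'), ho l l']
    by_cases h : l = l'
    · simp [h]
    · simp [h]
  simp_rw [h2]
  simp [Finset.sum_ite_eq, hl]

lemma aux_lintegral_norm_sq {F : X → H} (hF : MemLp F 2 μ) :
    ∫⁻ x, (‖F x‖₊ : ℝ≥0∞) ^ 2 ∂μ = ENNReal.ofReal (∫ x, ‖F x‖ ^ 2 ∂μ) := by
  rw [ofReal_integral_eq_lintegral_ofReal ((memLp_two_iff_integrable_sq_norm hF.1).mp hF)
    (Filter.Eventually.of_forall fun x => sq_nonneg _)]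
  refine lintegral_congr fun x => ?_
  rw [ENNReal.ofReal_pow (norm_nonneg _), ofReal_norm, enorm_eq_nnnorm]

end

lemma aux_le_rpow_half {a b : ℝ≥0∞} (h : a ^ 2 ≤ b) : a ≤ b ^ (1/2 : ℝ) := by
  have h2 := ENNReal.rpow_le_rpow h (by norm_num : (0:ℝ) ≤ 1/2)
  rwa [← ENNReal.rpow_natCast a 2, ← ENNReal.rpow_mul,
    (by norm_num : ((2:ℕ):ℝ) * (1/2 : ℝ) = 1), ENNReal.rpow_one] at h2

lemma aux_sq_of_rpow_half (t : ℝ≥0∞) : (2 * t ^ (1/2:ℝ)) ^ 2 = 4 * t := by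
  rw [mul_pow, ← ENNReal.rpow_natCast (t ^ (1/2:ℝ)) 2, ← ENNReal.rpow_mul,
    (by norm_num : (1/2 : ℝ) * ((2:ℕ):ℝ) = 1), ENNReal.rpow_one]
  norm_num

set_option maxHeartbeats 2000000 in
/-- L² bound for the majorant δ_k of the rearranged block of the orthogonal series. -/
theorem rearranged_block_majorant_bound
    {X : Type*} [MeasurableSpace X] (μ : Measure X)
    {𝕜 : Type*} [RCLike 𝕜]
    {H : Type*} [NormedAddCommGroup H] [InnerProductSpace 𝕜 H] [CompleteSpace H]
    (a : ℕ → 𝕜) (φ : ℕ → X → H)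
    (hmem : ∀ n, 1 ≤ n → MemLp (φ n) 2 μ)
    (horth : ∀ n m, 1 ≤ n → 1 ≤ m →
      ∫ x, (inner 𝕜 (φ n x) (φ m x) : 𝕜) ∂μ = if n = m then (1 : 𝕜) else 0)
    (ha1 : a 1 = 0) (ha2 : a 2 = 0)
    (σ : Equiv.Perm ℕ) (hσ : σ 0 = 0) (k : ℕ) :
    (∫⁻ x, (⨆ p : ℕ, ⨆ q : ℕ,
        (‖∑ n ∈ (Finset.Icc (p + 1) q).filter
            (fun n => σ n ∈ Finset.Icc (2 ^ 2 ^ k + 1) (2 ^ 2 ^ (k + 1))),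
          a (σ n) • φ (σ n) x‖₊ : ℝ≥0∞)) ^ 2 ∂μ) ^ (1 / 2 : ℝ)
      ≤ ENNReal.ofReal
          (8 * Real.sqrt (∑ n ∈ Finset.Icc (2 ^ 2 ^ k + 1) (2 ^ 2 ^ (k + 1)),
            ‖a n‖ ^ 2 * (Real.logb 2 (n : ℝ)) ^ 2)) := by
  classical
  set M : Finset ℕ := Finset.Icc (2 ^ 2 ^ k + 1) (2 ^ 2 ^ (k + 1)) with hMdef
  set T : Finset ℕ := M.image σ.symm with hTdef
  have hT_mem : ∀ n, n ∈ T ↔ σ n ∈ M := by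
    intro n
    simp only [hTdef, Finset.mem_image]
    constructor
    · rintro ⟨m, hm, rfl⟩; simpa [Equiv.apply_symm_apply] using hm
    · intro h; exact ⟨σ n, h, σ.symm_apply_apply n⟩
  have hT0 : (0 : ℕ) ∉ T := by
    intro h0
    rw [hT_mem, hσ, hMdef, Finset.mem_Icc] at h0
    exact Nat.not_lt_zero _ (lt_of_lt_of_le (Nat.lt_succ_self _) h0.1)
  set N : ℕ := T.card with hNdef
  have hcardT : T.card = N := rfl
  set g : Fin N ↪o ℕ := T.orderEmbOfFin hcardT with hgdef
  have hg_mem : ∀ i, (g i : ℕ) ∈ T := fun i => T.orderEmbOfFin_mem hcardT i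
  have hg_range : ∀ t, t ∈ T ↔ ∃ i, g i = t := by
    intro t
    rw [← Finset.mem_coe, ← Finset.range_orderEmbOfFin T hcardT]
    exact Iff.rfl
  have hm_mem : ∀ i, σ (g i) ∈ M := fun i => (hT_mem _).1 (hg_mem i)
  have hm_one : ∀ i, 1 ≤ σ (g i) := by
    intro i
    have := hm_mem i
    rw [hMdef, Finset.mem_Icc] at this
    exact le_trans (Nat.le_add_left 1 _) this.1
  have hm_inj : Function.Injective (fun i : Fin N => σ (g i)) :=
    σ.injective.comp g.injective
  set f : ℕ → X → H := fun l x =>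
    if hl : l < N then a (σ (g ⟨l, hl⟩)) • φ (σ (g ⟨l, hl⟩)) x else 0 with hfdef
  set w : ℕ → ℝ := fun l => if hl : l < N then ‖a (σ (g ⟨l, hl⟩))‖ ^ 2 else 0 with hwdef
  have hfmem : ∀ l, MemLp (f l) 2 μ := by
    intro l
    by_cases hl : l < N
    · have := (hmem _ (hm_one ⟨l, hl⟩)).const_smul (a (σ (g ⟨l, hl⟩)))
      simp only [hfdef, dif_pos hl]; exact this
    · simpa [hfdef, hl] using MemLp.zero' (ε := H) (μ := μ) (p := 2)
  have horthf : ∀ l l', ∫ x, (inner 𝕜 (f l x) (f l' x) : 𝕜) ∂μ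
      = if l = l' then ((w l : ℝ) : 𝕜) else 0 := by
    intro l l'
    by_cases hl : l < N
    · by_cases hl' : l' < N
      · have hinner : ∀ x : X, (inner 𝕜 (f l x) (f l' x) : 𝕜)
            = (starRingEnd 𝕜 (a (σ (g ⟨l, hl⟩))) * a (σ (g ⟨l', hl'⟩)))
                • (inner 𝕜 (φ (σ (g ⟨l, hl⟩)) x) (φ (σ (g ⟨l', hl'⟩)) x) : 𝕜) := by
          intro x
          simp only [hfdef, dif_pos hl, dif_pos hl', inner_smul_left, inner_smul_right,
            smul_eq_mul]
          ring
        simp_rw [hinner]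
        rw [integral_smul, horth _ _ (hm_one _) (hm_one _)]
        by_cases he : l = l'
        · subst he
          rw [if_pos rfl, if_pos rfl, smul_eq_mul, mul_one, RCLike.conj_mul]
          simp [hwdef, hl]
        · have hne : σ (g ⟨l, hl⟩) ≠ σ (g ⟨l', hl'⟩) := by
            intro hEq
            exact he (by simpa using congrArg Fin.val (hm_inj hEq))
          rw [if_neg hne, smul_zero, if_neg he]
      · have hne : l ≠ l' := by omega
        simp [hfdef, dif_neg hl', hne]
    · have h0 : ∀ x : X, (inner 𝕜 (f l x) (f l' x) : 𝕜) = 0 := by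
        intro x; simp [hfdef, dif_neg hl]
      simp_rw [h0]
      rw [integral_zero]
      by_cases he : l = l'
      · subst he
        simp [hwdef, dif_neg hl]
      · rw [if_neg he]
  have hTim : T = Finset.univ.image (fun i : Fin N => (g i : ℕ)) := by
    ext t
    simp only [Finset.mem_image, Finset.mem_univ, true_and]
    exact hg_range t
  have hW : ∑ l ∈ Finset.range N, w l = ∑ m ∈ M, ‖a m‖ ^ 2 := by
    have h1 : ∑ l ∈ Finset.range N, w l = ∑ i : Fin N, w i.val := by
      rw [Fin.sum_univ_eq_sum_range (fun l => w l) N]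
    have h2 : ∀ i : Fin N, w i.val = ‖a (σ (g i))‖ ^ 2 := by
      intro i
      simp [hwdef, i.isLt]
    rw [h1, Finset.sum_congr rfl fun i _ => h2 i]
    have h3 : ∑ m ∈ M, ‖a m‖ ^ 2 = ∑ t ∈ T, ‖a (σ t)‖ ^ 2 := by
      rw [hTdef, Finset.sum_image (fun i _ j _ h => σ.symm.injective h)]
      exact Finset.sum_congr rfl fun m _ => by rw [Equiv.apply_symm_apply]
    rw [h3, hTim, Finset.sum_image (fun i _ j _ h => g.injective h)]
  have hWnn : 0 ≤ ∑ l ∈ Finset.range N, w l := by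
    rw [hW]
    positivity
  set hh : ℕ := 2 ^ (k + 1) + 1 with hhdef
  have hNlt : N < 2 ^ hh := by
    have hcard : N = M.card := (Finset.card_image_of_injective _ σ.symm.injective)
    have hcard2 : M.card = 2 ^ 2 ^ (k + 1) + 1 - (2 ^ 2 ^ k + 1) := by
      rw [hMdef, Nat.card_Icc]
    have h1 : (1:ℕ) ≤ 2 ^ 2 ^ k := Nat.one_le_two_pow
    have h2 : N ≤ 2 ^ 2 ^ (k + 1) := by
      rw [hcard, hcard2, Nat.succ_sub_succ]
      exact Nat.sub_le _ _
    refine lt_of_le_of_lt h2 ?_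
    rw [hhdef]
    exact Nat.pow_lt_pow_right (by norm_num) (by omega)
  have hre : ∀ q : ℕ, ∃ j, j ≤ N ∧ ∀ x,
      ∑ n ∈ (Finset.Icc 1 q).filter (fun n => σ n ∈ M), a (σ n) • φ (σ n) x
        = ∑ l ∈ Finset.range j, f l x := by
    intro q
    set A : Finset ℕ :=
      (Finset.univ.filter fun i : Fin N => (g i : ℕ) ≤ q).image Fin.val with hAdef
    have hAdown : ∀ a' ∈ A, ∀ b, b ≤ a' → b ∈ A := by
      intro a' ha' b hb
      simp only [hAdef, Finset.mem_image, Finset.mem_filter, Finset.mem_univ, true_and]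
        at ha' ⊢
      obtain ⟨i, hi, rfl⟩ := ha'
      refine ⟨⟨b, lt_of_le_of_lt hb i.isLt⟩, ?_, rfl⟩
      have hble : (⟨b, lt_of_le_of_lt hb i.isLt⟩ : Fin N) ≤ i := by
        simpa [Fin.le_def] using hb
      exact le_trans (g.monotone hble) hi
    have hAcard : A.card ≤ N :=
      le_trans Finset.card_image_le (le_trans (Finset.card_filter_le _ _) (by simp))
    refine ⟨A.card, hAcard, fun x => ?_⟩
    have hfilter_eq : (Finset.Icc 1 q).filter (fun n => σ n ∈ M) = T.filter (· ≤ q) := by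
      ext n
      simp only [Finset.mem_filter, Finset.mem_Icc, hT_mem]
      constructor
      · rintro ⟨⟨_, hnq⟩, hn⟩; exact ⟨hn, hnq⟩
      · rintro ⟨hn, hnq⟩
        refine ⟨⟨?_, hnq⟩, hn⟩
        rcases Nat.eq_zero_or_pos n with rfl | h
        · exact absurd ((hT_mem 0).2 hn) hT0
        · exact h
    have hTq_eq : T.filter (· ≤ q)
        = (Finset.univ.filter fun i : Fin N => (g i : ℕ) ≤ q).image (fun i => (g i : ℕ)) := by
      ext t
      simp only [Finset.mem_filter, Finset.mem_image, Finset.mem_univ, true_and]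
      constructor
      · rintro ⟨ht, htq⟩
        obtain ⟨i, rfl⟩ := (hg_range t).1 ht
        exact ⟨i, htq, rfl⟩
      · rintro ⟨i, hiq, rfl⟩
        exact ⟨hg_mem i, hiq⟩
    rw [hfilter_eq, hTq_eq, Finset.sum_image (fun i _ j _ h => g.injective h),
      ← aux_downset_eq_range A hAdown, hAdef,
      Finset.sum_image (fun i _ j _ h => Fin.val_injective h)]
    refine Finset.sum_congr rfl fun i _ => ?_
    simp only [hfdef]
    rw [dif_pos i.isLt]
  set G : X → ℝ≥0∞ := fun x => ∑ r ∈ Finset.range hh,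
    ∑ i ∈ Finset.range (2 ^ (hh - r)),
      (‖∑ l ∈ Finset.Ico (i * 2 ^ r) (i * 2 ^ r + 2 ^ r), f l x‖₊ : ℝ≥0∞) ^ 2 with hGdef
  have hUb : ∀ (x : X) (j : ℕ), j ≤ N →
      (‖∑ l ∈ Finset.range j, f l x‖₊ : ℝ≥0∞) ^ 2 ≤ (hh : ℝ≥0∞) * G x := by
    intro x j hj
    obtain ⟨c, hc1, hc2⟩ := aux_chain hh (fun l => f l x) j (lt_of_le_of_lt hj hNlt)
    have hnn : ‖∑ l ∈ Finset.range j, f l x‖₊ ^ 2 ≤ (hh : ℝ≥0) * ∑ r ∈ Finset.range hh,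
        ∑ i ∈ Finset.range (2 ^ (hh - r)),
          ‖∑ l ∈ Finset.Ico (i * 2 ^ r) (i * 2 ^ r + 2 ^ r), f l x‖₊ ^ 2 := by
      calc ‖∑ l ∈ Finset.range j, f l x‖₊ ^ 2
          ≤ (∑ r ∈ Finset.range hh, c r) ^ 2 := pow_le_pow_left₀ (by positivity) hc1 2
        _ ≤ (hh : ℝ≥0) * ∑ r ∈ Finset.range hh, c r ^ 2 := aux_sq_sum_le hh c
        _ ≤ _ := by
            gcongr with r hr
            exact hc2 r (Finset.mem_range.1 hr)
    have hcoe := ENNReal.coe_le_coe.2 hnn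
    push_cast at hcoe
    have hcast : ((hh : ℝ≥0∞)) = (2:ℝ≥0∞)^(k+1) + 1 := by rw [hhdef]; push_cast; rfl
    simp only [hGdef]
    rw [hcast] at hcoe ⊢
    exact hcoe
  have hpoint : ∀ x : X, (⨆ p : ℕ, ⨆ q : ℕ,
      (‖∑ n ∈ (Finset.Icc (p + 1) q).filter (fun n => σ n ∈ M),
        a (σ n) • φ (σ n) x‖₊ : ℝ≥0∞))
      ≤ 2 * ((hh : ℝ≥0∞) * G x) ^ (1/2 : ℝ) := by
    intro x
    have hS : ∀ q' : ℕ, (‖∑ n ∈ (Finset.Icc 1 q').filter (fun n => σ n ∈ M),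
        a (σ n) • φ (σ n) x‖₊ : ℝ≥0∞) ≤ ((hh : ℝ≥0∞) * G x) ^ (1/2 : ℝ) := by
      intro q'
      obtain ⟨j, hj, hjeq⟩ := hre q'
      rw [hjeq x]
      exact aux_le_rpow_half (hUb x j hj)
    refine iSup_le fun p => iSup_le fun q => ?_
    by_cases hpq : p ≤ q
    · have hunion : Finset.Icc 1 q = Finset.Icc (p + 1) q ∪ Finset.Icc 1 p := by
        ext n
        simp only [Finset.mem_Icc, Finset.mem_union]
        omega
      have hdisj : Disjoint ((Finset.Icc (p + 1) q).filter (fun n => σ n ∈ M))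
          ((Finset.Icc 1 p).filter (fun n => σ n ∈ M)) := by
        refine Finset.disjoint_filter_filter ?_
        rw [Finset.disjoint_left]
        intro n hn hn'
        simp only [Finset.mem_Icc] at hn hn'
        omega
      have hsum : ∑ n ∈ (Finset.Icc 1 q).filter (fun n => σ n ∈ M),
            a (σ n) • φ (σ n) x
          = ∑ n ∈ (Finset.Icc (p + 1) q).filter (fun n => σ n ∈ M), a (σ n) • φ (σ n) x
            + ∑ n ∈ (Finset.Icc 1 p).filter (fun n => σ n ∈ M), a (σ n) • φ (σ n) x := by
        rw [← Finset.sum_union hdisj, ← Finset.filter_union, ← hunion]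
      have heq : ∑ n ∈ (Finset.Icc (p + 1) q).filter (fun n => σ n ∈ M),
            a (σ n) • φ (σ n) x
          = (∑ n ∈ (Finset.Icc 1 q).filter (fun n => σ n ∈ M), a (σ n) • φ (σ n) x)
            - ∑ n ∈ (Finset.Icc 1 p).filter (fun n => σ n ∈ M), a (σ n) • φ (σ n) x := by
        rw [hsum]; abel
      calc (‖∑ n ∈ (Finset.Icc (p + 1) q).filter (fun n => σ n ∈ M),
            a (σ n) • φ (σ n) x‖₊ : ℝ≥0∞)
          ≤ (‖∑ n ∈ (Finset.Icc 1 q).filter (fun n => σ n ∈ M), a (σ n) • φ (σ n) x‖₊ : ℝ≥0∞)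
            + (‖∑ n ∈ (Finset.Icc 1 p).filter (fun n => σ n ∈ M),
                a (σ n) • φ (σ n) x‖₊ : ℝ≥0∞) := by
            rw [heq]
            exact_mod_cast nnnorm_sub_le _ _
        _ ≤ ((hh : ℝ≥0∞) * G x) ^ (1/2 : ℝ) + ((hh : ℝ≥0∞) * G x) ^ (1/2 : ℝ) :=
            add_le_add (hS q) (hS p)
        _ = 2 * ((hh : ℝ≥0∞) * G x) ^ (1/2 : ℝ) := (two_mul _).symm
    · have hempty : Finset.Icc (p + 1) q = ∅ := by
        rw [Finset.Icc_eq_empty_iff]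
        omega
      rw [hempty]
      simp
  have hw_nonneg : ∀ l, 0 ≤ w l := by
    intro l
    by_cases hl : l < N
    · simp only [hwdef, dif_pos hl]; positivity
    · simp [hwdef, dif_neg hl]
  have hmemB : ∀ s : Finset ℕ, MemLp (fun x => ∑ l ∈ s, f l x) 2 μ :=
    fun s => memLp_finsetSum s (fun l _ => hfmem l)
  have hGint : ∫⁻ x, G x ∂μ
      = (hh : ℝ≥0∞) * ENNReal.ofReal (∑ l ∈ Finset.range N, w l) := by
    have hBmeas : ∀ s : Finset ℕ,
        AEMeasurable (fun x => (‖∑ l ∈ s, f l x‖₊ : ℝ≥0∞) ^ 2) μ := by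
      intro s
      exact ((hmemB s).aestronglyMeasurable.enorm).pow_const 2
    simp only [hGdef]
    rw [lintegral_finsetSum' _ (fun r _ => Finset.aemeasurable_fun_sum _ fun i _ => hBmeas _)]
    have hblock : ∀ r ∈ Finset.range hh, ∫⁻ x, ∑ i ∈ Finset.range (2 ^ (hh - r)),
          (‖∑ l ∈ Finset.Ico (i * 2 ^ r) (i * 2 ^ r + 2 ^ r), f l x‖₊ : ℝ≥0∞) ^ 2 ∂μ
        = ENNReal.ofReal (∑ l ∈ Finset.range N, w l) := by
      intro r hr
      rw [lintegral_finsetSum' _ (fun i _ => hBmeas _)]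
      have hone : ∀ i : ℕ, ∫⁻ x,
          (‖∑ l ∈ Finset.Ico (i * 2 ^ r) (i * 2 ^ r + 2 ^ r), f l x‖₊ : ℝ≥0∞) ^ 2 ∂μ
          = ENNReal.ofReal (∑ l ∈ Finset.Ico (i * 2 ^ r) (i * 2 ^ r + 2 ^ r), w l) := by
        intro i
        rw [aux_lintegral_norm_sq (hmemB _), aux_integral_norm_sq_sum f w hfmem horthf]
      simp_rw [hone]
      rw [← ENNReal.ofReal_sum_of_nonneg
        (fun i _ => Finset.sum_nonneg fun l _ => hw_nonneg l)]
      congr 1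
      rw [aux_sum_blocks w (2 ^ r) (2 ^ (hh - r))]
      have hrle : r ≤ hh := le_of_lt (Finset.mem_range.1 hr)
      have hpow : 2 ^ (hh - r) * 2 ^ r = 2 ^ hh := by
        rw [← pow_add]
        congr 1
        omega
      have hN2 : N ≤ 2 ^ (hh - r) * 2 ^ r := by
        rw [hpow]
        exact le_of_lt hNlt
      refine (Finset.sum_subset (Finset.range_subset_range.2 hN2) fun l _ hl => ?_).symm
      have : ¬ l < N := fun hc => hl (Finset.mem_range.2 hc)
      simp [hwdef, dif_neg this]
    rw [Finset.sum_congr rfl hblock, Finset.sum_const, Finset.card_range, nsmul_eq_mul]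
  set W : ℝ := ∑ l ∈ Finset.range N, w l with hWWdef
  set R : ℝ := ∑ n ∈ M, ‖a n‖ ^ 2 * (Real.logb 2 (n : ℝ)) ^ 2 with hRdef
  have hRnn : 0 ≤ R := by
    rw [hRdef]
    positivity
  have hWR : ((2:ℝ) ^ k) ^ 2 * W ≤ R := by
    rw [hW, hRdef, Finset.mul_sum]
    refine Finset.sum_le_sum fun m hm => ?_
    have hm' : 2 ^ 2 ^ k + 1 ≤ m := by
      rw [hMdef, Finset.mem_Icc] at hm
      exact hm.1
    have hm2 : (2:ℝ) ^ (2 ^ k) ≤ (m:ℝ) := by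
      have : (2:ℕ) ^ 2 ^ k ≤ m := le_trans (Nat.le_succ _) hm'
      exact_mod_cast this
    have hlog : (2:ℝ) ^ k ≤ Real.logb 2 (m:ℝ) := by
      have h1 : Real.logb 2 ((2:ℝ) ^ (2 ^ k : ℕ)) = (2 ^ k : ℕ) := by
        rw [Real.logb_pow, Real.logb_self_eq_one (by norm_num), mul_one]
      have h2 : Real.logb 2 ((2:ℝ) ^ (2 ^ k : ℕ)) ≤ Real.logb 2 (m:ℝ) := by
        exact Real.logb_le_logb_of_le (by norm_num) (by positivity) hm2
      rw [h1] at h2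
      exact le_trans (le_of_eq (by push_cast; ring)) h2
    calc ((2:ℝ) ^ k) ^ 2 * ‖a m‖ ^ 2 ≤ (Real.logb 2 (m:ℝ)) ^ 2 * ‖a m‖ ^ 2 := by
          have := pow_le_pow_left₀ (by positivity) hlog 2
          exact mul_le_mul_of_nonneg_right this (by positivity)
      _ = ‖a m‖ ^ 2 * (Real.logb 2 (m:ℝ)) ^ 2 := by ring
  have hWnn' : (0:ℝ) ≤ W := hWnn
  calc (∫⁻ x, (⨆ p : ℕ, ⨆ q : ℕ,
        (‖∑ n ∈ (Finset.Icc (p + 1) q).filter (fun n => σ n ∈ M),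
          a (σ n) • φ (σ n) x‖₊ : ℝ≥0∞)) ^ 2 ∂μ) ^ (1 / 2 : ℝ)
      ≤ (∫⁻ x, (2 * ((hh : ℝ≥0∞) * G x) ^ (1/2 : ℝ)) ^ 2 ∂μ) ^ (1 / 2 : ℝ) := by
        refine ENNReal.rpow_le_rpow ?_ (by norm_num)
        exact lintegral_mono fun x => pow_le_pow_left' (hpoint x) 2
    _ = ((4 * hh : ℝ≥0∞) * ∫⁻ x, G x ∂μ) ^ (1 / 2 : ℝ) := by
        congr 1
        rw [lintegral_congr fun x => aux_sq_of_rpow_half ((hh : ℝ≥0∞) * G x)]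
        simp_rw [← mul_assoc]
        exact lintegral_const_mul' _ _
          (ENNReal.mul_ne_top (by norm_num) (ENNReal.natCast_ne_top hh))
    _ = (ENNReal.ofReal (4 * (hh:ℝ) ^ 2 * W)) ^ (1 / 2 : ℝ) := by
        rw [hGint]
        congr 1
        rw [ENNReal.ofReal_mul (by positivity), ENNReal.ofReal_mul (by norm_num : (0:ℝ) ≤ 4),
          ENNReal.ofReal_pow (by positivity), ENNReal.ofReal_natCast,
          ENNReal.ofReal_ofNat]
        ring
    _ = ENNReal.ofReal ((4 * (hh:ℝ) ^ 2 * W) ^ ((1:ℝ)/2)) := by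
        rw [ENNReal.ofReal_rpow_of_nonneg (by positivity) (by norm_num)]
    _ ≤ ENNReal.ofReal (8 * Real.sqrt R) := by
        apply ENNReal.ofReal_le_ofReal
        rw [← Real.sqrt_eq_rpow]
        have hhle : (hh:ℝ) ≤ 4 * 2 ^ k := by
          rw [hhdef]
          push_cast
          rw [pow_succ]
          have h1 : (1:ℝ) ≤ 2 ^ k := one_le_pow₀ (by norm_num)
          linarith
        have hkey : 4 * (hh:ℝ) ^ 2 * W ≤ 64 * R := by
          have h2 : 4 * (hh:ℝ) ^ 2 ≤ 64 * ((2:ℝ) ^ k) ^ 2 := by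
            have hh0 : (0:ℝ) ≤ (hh:ℝ) := Nat.cast_nonneg hh
            nlinarith
          calc 4 * (hh:ℝ) ^ 2 * W ≤ 64 * ((2:ℝ) ^ k) ^ 2 * W :=
                mul_le_mul_of_nonneg_right h2 hWnn'
            _ = 64 * (((2:ℝ) ^ k) ^ 2 * W) := by ring
            _ ≤ 64 * R := by linarith
        calc Real.sqrt (4 * (hh:ℝ) ^ 2 * W) ≤ Real.sqrt (64 * R) := Real.sqrt_le_sqrt hkey
          _ = 8 * Real.sqrt R := by
              rw [(by norm_num : (64:ℝ) = 8 ^ 2), Real.sqrt_mul (by positivity) R,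
                Real.sqrt_sq (by norm_num : (0:ℝ) ≤ 8)]
end

section
/- Let (a_n)_{n=1}^∞ be a sequence of scalars (real or complex) and (ω_n)_{n=1}^∞ a nondecreasing sequence of positive real numbers such that Σ_{n=2}^∞ |a_n|² (log₂ n)² ω_n < ∞ and Σ_{n=2}^∞ 1/(n (log₂ n) ω_n) < ∞. Then, with ν_k := 2^{2^k}, one has Σ_{k=0}^∞ ( Σ_{n=ν_k+1}^{ν_{k+1}} |a_n|² (log₂ n)² )^{1/2} < ∞. -/
open scoped BigOperators

private lemma sum_blocks_aux (F : ℕ → ℝ) (φ : ℕ → ℕ) (hφ : Monotone φ) {m M : ℕ} (h : m ≤ M) :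
    ∑ j ∈ Finset.Ico m M, ∑ n ∈ Finset.Ioc (φ j) (φ (j+1)), F n
      = ∑ n ∈ Finset.Ioc (φ m) (φ M), F n := by
  induction M, h using Nat.le_induction with
  | base => simp
  | succ M hM ih =>
    rw [Finset.sum_Ico_succ_top hM, ih]
    exact Finset.sum_Ioc_consecutive F (hφ hM) (hφ (Nat.le_succ M))

private lemma summable_blocks_aux (F : ℕ → ℝ) (hF : ∀ n, 0 ≤ F n) (hs : Summable F)
    (φ : ℕ → ℕ) (hφ : Monotone φ) :
    Summable fun k => ∑ n ∈ Finset.Ioc (φ k) (φ (k+1)), F n := by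
  apply summable_of_sum_range_le (c := ∑' n, F n)
    (fun k => Finset.sum_nonneg fun n _ => hF n)
  intro K
  rw [Finset.range_eq_Ico, sum_blocks_aux F φ hφ (Nat.zero_le K)]
  exact hs.sum_le_tsum _ (fun n _ => hF n)

/-- The Orlicz conditions imply the Tandori condition. -/
theorem orlicz_conditions_imply_tandori_condition
    {𝕜 : Type*} [RCLike 𝕜]
    (a : ℕ → 𝕜) (ω : ℕ → ℝ)
    (hω_pos : ∀ n, 1 ≤ n → 0 < ω n)
    (hω_mono : ∀ n m, 1 ≤ n → n ≤ m → ω n ≤ ω m)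
    (h8 : Summable fun n : ℕ =>
      ‖a (n + 2)‖ ^ 2 * (Real.logb 2 ((n : ℝ) + 2)) ^ 2 * ω (n + 2))
    (h9 : Summable fun n : ℕ =>
      1 / (((n : ℝ) + 2) * Real.logb 2 ((n : ℝ) + 2) * ω (n + 2))) :
    Summable fun k : ℕ =>
      Real.sqrt (∑ n ∈ Finset.Icc (2 ^ 2 ^ k + 1) (2 ^ 2 ^ (k + 1)),
        ‖a n‖ ^ 2 * (Real.logb 2 (n : ℝ)) ^ 2) := by
  -- notation
  set ν : ℕ → ℕ := fun k => 2 ^ 2 ^ k with hνdef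
  have hν_mono : Monotone ν := fun i j h =>
    Nat.pow_le_pow_right (by norm_num) (Nat.pow_le_pow_right (by norm_num) h)
  have hν_two : ∀ k, 2 ≤ ν k := fun k =>
    Nat.one_lt_two_pow_iff.mpr (by positivity)
  set W : ℕ → ℝ := fun k => ω (ν k + 1) with hWdef
  have hW_pos : ∀ k, 0 < W k := fun k => hω_pos _ (Nat.le_add_left 1 _)
  -- the truncated summand functions
  set F : ℕ → ℝ := fun n =>
    if 2 ≤ n then ‖a n‖ ^ 2 * (Real.logb 2 (n : ℝ)) ^ 2 * ω n else 0 with hFdef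
  set G : ℕ → ℝ := fun n =>
    if 2 ≤ n then 1 / ((n : ℝ) * Real.logb 2 (n : ℝ) * ω n) else 0 with hGdef
  have hlogb_one_le : ∀ n : ℕ, 2 ≤ n → 1 ≤ Real.logb 2 (n : ℝ) := by
    intro n hn
    have h2 : Real.logb 2 (2 : ℝ) = 1 := Real.logb_self_eq_one (by norm_num)
    calc (1:ℝ) = Real.logb 2 (2:ℝ) := h2.symm
    _ ≤ Real.logb 2 (n : ℝ) := Real.logb_le_logb_of_le (by norm_num) (by norm_num)
        (by exact_mod_cast hn)
  have hF_nonneg : ∀ n, 0 ≤ F n := by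
    intro n
    simp only [hFdef]
    split
    · rename_i h
      have := (hω_pos n (by omega)).le
      positivity
    · exact le_rfl
  have hG_nonneg : ∀ n, 0 ≤ G n := by
    intro n
    simp only [hGdef]
    split
    · rename_i h
      have h1 := (hω_pos n (by omega))
      have h2 := hlogb_one_le n h
      have h3 : (0:ℝ) < n := by positivity
      positivity
    · exact le_rfl
  have hF_summable : Summable F := by
    rw [← summable_nat_add_iff 2]
    refine h8.congr fun n => ?_
    simp only [hFdef, if_pos (by omega : 2 ≤ n + 2)]
    push_cast
    ring
  have hG_summable : Summable G := by
    rw [← summable_nat_add_iff 2]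
    refine h9.congr fun n => ?_
    simp only [hGdef, if_pos (by omega : 2 ≤ n + 2)]
    push_cast
    ring
  -- block sums
  have hA_summable : Summable fun k => ∑ n ∈ Finset.Ioc (ν k) (ν (k+1)), F n :=
    summable_blocks_aux F hF_nonneg hF_summable ν hν_mono
  have hG_blocks : Summable fun k => ∑ n ∈ Finset.Ioc (ν k) (ν (k+1)), G n :=
    summable_blocks_aux G hG_nonneg hG_summable ν hν_mono
  -- key estimate (B) : 1 / W (k+1) ≤ 4 * block sum of G
  have hB : ∀ k, 1 / W (k+1) ≤ 4 * ∑ n ∈ Finset.Ioc (ν k) (ν (k+1)), G n := by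
    intro k
    have hsplit : ∑ n ∈ Finset.Ioc (ν k) (ν (k+1)), G n
        = ∑ j ∈ Finset.Ico (2^k) (2^(k+1)),
            ∑ n ∈ Finset.Ioc (2^j) (2^(j+1)), G n := by
      rw [sum_blocks_aux G (fun j => 2 ^ j)
        (fun i j h => Nat.pow_le_pow_right (by norm_num) h)
        (Nat.pow_le_pow_right (by norm_num) (Nat.le_succ k))]
    -- inner bound
    have hinner : ∀ j ∈ Finset.Ico (2^k) (2^(k+1)),
        1 / (2 * ((2:ℝ)^(k+1)) * W (k+1)) ≤ ∑ n ∈ Finset.Ioc (2^j) (2^(j+1)), G n := by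
      intro j hj
      rw [Finset.mem_Ico] at hj
      have hj1 : 1 ≤ j := le_trans (Nat.one_le_two_pow) hj.1
      have hterm : ∀ n ∈ Finset.Ioc (2^j) (2^(j+1)),
          1 / ((2:ℝ)^(j+1) * ((j:ℝ)+1) * W (k+1)) ≤ G n := by
        intro n hn
        rw [Finset.mem_Ioc] at hn
        have hn2 : 2 ≤ n := by
          have : 2 ≤ 2 ^ j := Nat.one_lt_two_pow_iff.mpr (by omega)
          omega
        have hnν : n ≤ ν (k+1) + 1 := by
          have h1 : n ≤ 2 ^ (j+1) := hn.2
          have h2 : 2 ^ (j+1) ≤ 2 ^ 2 ^ (k+1) :=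
            Nat.pow_le_pow_right (by norm_num) (by omega)
          simp only [hνdef]
          omega
        have hωle : ω n ≤ W (k+1) := hω_mono n (ν (k+1) + 1) (by omega) hnν
        have hlog_le : Real.logb 2 (n:ℝ) ≤ (j:ℝ) + 1 := by
          have hpow : Real.logb 2 ((2:ℝ)^(j+1)) = (j:ℝ) + 1 := by
            rw [Real.logb_pow, Real.logb_self_eq_one (by norm_num)]
            push_cast; ring
          rw [← hpow]
          refine Real.logb_le_logb_of_le (by norm_num) (by positivity) ?_
          exact_mod_cast hn.2
        have hlog1 : 1 ≤ Real.logb 2 (n:ℝ) := hlogb_one_le n hn2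
        have hnr : (n:ℝ) ≤ (2:ℝ)^(j+1) := by exact_mod_cast hn.2
        have hωpos : 0 < ω n := hω_pos n (by omega)
        have hnpos : (0:ℝ) < n := by positivity
        simp only [hGdef, if_pos hn2]
        apply one_div_le_one_div_of_le
        · positivity
        · have hW := hW_pos (k+1)
          gcongr <;> positivity
      have hcard : (Finset.Ioc (2^j) (2^(j+1))).card = 2^j := by
        rw [Nat.card_Ioc]
        have : 2^(j+1) = 2 * 2^j := by ring
        omega
      have hsum := Finset.card_nsmul_le_sum _ _ _ hterm
      rw [hcard, nsmul_eq_mul] at hsum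
      push_cast at hsum
      refine le_trans ?_ hsum
      have hR : (2:ℝ)^j * (1 / ((2:ℝ)^(j+1) * ((j:ℝ)+1) * W (k+1)))
          = 1 / (2 * ((j:ℝ)+1) * W (k+1)) := by
        have hW := (hW_pos (k+1)).ne'
        have h2 : (2:ℝ)^(j+1) = 2 * (2:ℝ)^j := by ring
        rw [h2]
        have h2j : ((2:ℝ)^j) ≠ 0 := by positivity
        field_simp
      rw [hR]
      apply one_div_le_one_div_of_le
      · have hW := hW_pos (k+1); positivity
      · have hjk : (j:ℝ) + 1 ≤ (2:ℝ)^(k+1) := by exact_mod_cast hj.2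
        have hW := hW_pos (k+1)
        gcongr
    rw [hsplit]
    have houter := Finset.card_nsmul_le_sum _ _ _ hinner
    rw [Nat.card_Ico, nsmul_eq_mul] at houter
    have hcard2 : 2^(k+1) - 2^k = 2^k := by
      have : 2^(k+1) = 2 * 2^k := by ring
      omega
    rw [hcard2] at houter
    push_cast at houter
    have hW := hW_pos (k+1)
    have heq : ((2:ℝ)^k) * (1 / (2 * (2:ℝ)^(k+1) * W (k+1))) = 1 / (4 * W (k+1)) := by
      have h2 : (2:ℝ)^(k+1) = 2 * (2:ℝ)^k := by ring
      have h2k : ((2:ℝ)^k) ≠ 0 := by positivity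
      rw [h2]
      field_simp
      ring
    rw [heq] at houter
    have hWinv : 1 / W (k+1) = 4 * (1 / (4 * W (k+1))) := by
      field_simp
    rw [hWinv]
    linarith
  -- summability of 1 / W
  have hWinv_summable : Summable fun k => 1 / W k := by
    rw [← summable_nat_add_iff 1]
    exact Summable.of_nonneg_of_le (fun k => by have := hW_pos (k+1); positivity)
      hB (hG_blocks.mul_left 4)
  -- estimate (A)
  have hA : ∀ k, (∑ n ∈ Finset.Ioc (ν k) (ν (k+1)), ‖a n‖ ^ 2 * (Real.logb 2 (n:ℝ)) ^ 2) * W k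
      ≤ ∑ n ∈ Finset.Ioc (ν k) (ν (k+1)), F n := by
    intro k
    rw [Finset.sum_mul]
    apply Finset.sum_le_sum
    intro n hn
    rw [Finset.mem_Ioc] at hn
    have hνk : 2 ≤ ν k := hν_two k
    have hn2 : 2 ≤ n := by omega
    have hWle : W k ≤ ω n := hω_mono (ν k + 1) n (by omega) (by omega)
    simp only [hFdef, if_pos hn2]
    exact mul_le_mul_of_nonneg_left hWle (by positivity)
  -- final assembly
  have hIcc : ∀ k : ℕ, Finset.Icc (2 ^ 2 ^ k + 1) (2 ^ 2 ^ (k + 1))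
      = Finset.Ioc (ν k) (ν (k+1)) := fun k => Finset.Icc_succ_left_eq_Ioc _ _
  simp only [hIcc]
  set S : ℕ → ℝ := fun k => ∑ n ∈ Finset.Ioc (ν k) (ν (k+1)),
    ‖a n‖ ^ 2 * (Real.logb 2 (n:ℝ)) ^ 2 with hSdef
  have hS_nonneg : ∀ k, 0 ≤ S k := fun k => Finset.sum_nonneg fun n _ => by positivity
  have hmaj_summable : Summable fun k =>
      ((∑ n ∈ Finset.Ioc (ν k) (ν (k+1)), F n) + 1 / W k) / 2 :=
    (hA_summable.add hWinv_summable).div_const 2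
  refine Summable.of_nonneg_of_le (fun k => Real.sqrt_nonneg _) (fun k => ?_) hmaj_summable
  have hW := hW_pos k
  have hSx : S k = (S k * W k) * (1 / W k) := by
    field_simp
  calc Real.sqrt (S k) = Real.sqrt ((S k * W k) * (1 / W k)) := by rw [← hSx]
    _ ≤ Real.sqrt (((S k * W k + 1 / W k) / 2) ^ 2) := by
        apply Real.sqrt_le_sqrt
        nlinarith [hS_nonneg k, hW, sq_nonneg (S k * W k - 1 / W k)]
    _ = (S k * W k + 1 / W k) / 2 := Real.sqrt_sq (by positivity)
    _ ≤ ((∑ n ∈ Finset.Ioc (ν k) (ν (k+1)), F n) + 1 / W k) / 2 := by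
        have := hA k
        linarith
end

section
/- Let N ≥ 1 be an integer, let (ψ_n)_{n=1}^N be functions in L₂(X, dμ; H), and suppose there is a constant c₂ > 0 such that ‖Σ_{n=1}^N b_n ψ_n‖₂² ≤ c₂ Σ_{n=1}^N |b_n|² for all scalars b_1, …, b_N. Then for any scalars b_1, …, b_N the function S*_N(x) := max_{1 ≤ j ≤ N} ‖Σ_{n=1}^j b_n ψ_n(x)‖_H satisfies (∫_X S*_N(x)² dμ(x))^{1/2} ≤ √c₂ · (2 + log₂ N) · (Σ_{n=1}^N |b_n|²)^{1/2}. -/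
open MeasureTheory Filter
open scoped ENNReal NNReal BigOperators

-- square of iSup bounded by tsum of squares
lemma mr_sq_iSup_le_tsum (a : ℕ → ℝ≥0∞) : (⨆ i, a i) ^ (2:ℝ) ≤ ∑' i, a i ^ (2:ℝ) := by
  have h : (⨆ i, a i) ≤ (∑' i, a i ^ (2:ℝ)) ^ (1/2:ℝ) := by
    refine iSup_le fun i => ?_
    have h1 : a i = (a i ^ (2:ℝ)) ^ ((1:ℝ)/2) := by
      rw [← ENNReal.rpow_mul]; norm_num
    rw [h1]
    exact ENNReal.rpow_le_rpow (ENNReal.le_tsum i) (by norm_num)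
  calc (⨆ i, a i) ^ (2:ℝ) ≤ ((∑' i, a i ^ (2:ℝ)) ^ (1/2:ℝ)) ^ (2:ℝ) :=
        ENNReal.rpow_le_rpow h (by norm_num)
    _ = _ := by rw [← ENNReal.rpow_mul]; norm_num

-- L² Minkowski inequality for finite sums, in ℝ≥0∞
lemma mr_minkowski {X : Type*} [MeasurableSpace X] (μ : Measure X)
    (s : Finset ℕ) (f : ℕ → X → ℝ≥0∞) (hf : ∀ k, AEMeasurable (f k) μ) :
    (∫⁻ x, (∑ k ∈ s, f k x) ^ (2:ℝ) ∂μ) ^ (1/2:ℝ)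
      ≤ ∑ k ∈ s, (∫⁻ x, f k x ^ (2:ℝ) ∂μ) ^ (1/2:ℝ) := by
  classical
  induction s using Finset.cons_induction with
  | empty =>
      simp [ENNReal.zero_rpow_of_pos]
  | cons a s ha ih =>
      simp only [Finset.sum_cons]
      have h2 := ENNReal.lintegral_Lp_add_le (μ := μ) (p := 2)
        (hf a) (Finset.aemeasurable_fun_sum s (fun i _ => hf i)) one_le_two
      simp only [Pi.add_apply] at h2
      calc (∫⁻ x, (f a x + ∑ k ∈ s, f k x) ^ (2:ℝ) ∂μ) ^ (1/2:ℝ)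
          ≤ (∫⁻ x, f a x ^ (2:ℝ) ∂μ) ^ (1/2:ℝ)
            + (∫⁻ x, (∑ k ∈ s, f k x) ^ (2:ℝ) ∂μ) ^ (1/2:ℝ) := h2
        _ ≤ _ := add_le_add le_rfl ih

-- block membership
lemma mr_block_mem_iff (k n i : ℕ) (hn : 1 ≤ n) :
    n ∈ Finset.Ioc (i * 2 ^ k) ((i + 1) * 2 ^ k) ↔ i = (n - 1) / 2 ^ k := by
  have hp : 0 < 2 ^ k := Nat.two_pow_pos k
  rw [Finset.mem_Ioc]
  constructor
  · rintro ⟨h1, h2⟩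
    have hle : i ≤ (n - 1) / 2 ^ k := (Nat.le_div_iff_mul_le hp).mpr (by omega)
    have hlt : (n - 1) / 2 ^ k < i + 1 := (Nat.div_lt_iff_lt_mul hp).mpr (by omega)
    omega
  · rintro rfl
    have h1 : (n - 1) / 2 ^ k * 2 ^ k ≤ n - 1 := Nat.div_mul_le_self _ _
    have h2 : n - 1 < ((n - 1) / 2 ^ k + 1) * 2 ^ k :=
      (Nat.div_lt_iff_lt_mul hp).mp (Nat.lt_succ_self _)
    omega

-- dyadic decomposition bound
lemma mr_dyadic_bound {H : Type*} [SeminormedAddCommGroup H] (g : ℕ → H) :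
    ∀ (K m j : ℕ), 1 ≤ j → j < 2 ^ K →
      (‖∑ n ∈ Finset.Ioc (m * 2 ^ K) (m * 2 ^ K + j), g n‖₊ : ℝ≥0∞) ≤
        ∑ k ∈ Finset.range K,
          ⨆ i : ℕ, (‖∑ n ∈ Finset.Ioc (i * 2 ^ k) ((i + 1) * 2 ^ k), g n‖₊ : ℝ≥0∞) := by
  intro K
  induction K with
  | zero => intro m j h1 h2; omega
  | succ K ih =>
    intro m j h1 h2
    have hsub : ∑ k ∈ Finset.range K, ⨆ i : ℕ,
          (‖∑ n ∈ Finset.Ioc (i * 2 ^ k) ((i + 1) * 2 ^ k), g n‖₊ : ℝ≥0∞)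
        ≤ ∑ k ∈ Finset.range (K+1), ⨆ i : ℕ,
          (‖∑ n ∈ Finset.Ioc (i * 2 ^ k) ((i + 1) * 2 ^ k), g n‖₊ : ℝ≥0∞) :=
      Finset.sum_le_sum_of_subset (Finset.range_subset_range.mpr (by omega))
    rcases lt_trichotomy j (2 ^ K) with hj | hj | hj
    · have hm : m * 2 ^ (K + 1) = (2 * m) * 2 ^ K := by ring
      rw [hm]
      exact le_trans (ih (2 * m) j h1 hj) hsub
    · have hblock : Finset.Ioc (m * 2 ^ (K+1)) (m * 2 ^ (K+1) + j)
          = Finset.Ioc ((2*m) * 2 ^ K) ((2*m + 1) * 2 ^ K) := by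
        subst hj; congr 1 <;> ring
      rw [hblock]
      calc (‖∑ n ∈ Finset.Ioc ((2*m) * 2 ^ K) ((2*m + 1) * 2 ^ K), g n‖₊ : ℝ≥0∞)
          ≤ ⨆ i : ℕ, (‖∑ n ∈ Finset.Ioc (i * 2 ^ K) ((i + 1) * 2 ^ K), g n‖₊ : ℝ≥0∞) :=
            le_iSup (fun i : ℕ => (‖∑ n ∈ Finset.Ioc (i * 2 ^ K) ((i + 1) * 2 ^ K), g n‖₊ : ℝ≥0∞)) (2*m)
        _ ≤ _ := Finset.single_le_sum (f := fun k => ⨆ i : ℕ,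
              (‖∑ n ∈ Finset.Ioc (i * 2 ^ k) ((i + 1) * 2 ^ k), g n‖₊ : ℝ≥0∞))
              (fun k _ => zero_le) (Finset.self_mem_range_succ K)
    · set a := m * 2 ^ (K+1) with ha
      have hsplit : ∑ n ∈ Finset.Ioc a (a + 2 ^ K), g n + ∑ n ∈ Finset.Ioc (a + 2 ^ K) (a + j), g n
          = ∑ n ∈ Finset.Ioc a (a + j), g n :=
        Finset.sum_Ioc_consecutive g (by omega) (by omega)
      have htri : (‖∑ n ∈ Finset.Ioc a (a + j), g n‖₊ : ℝ≥0∞)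
          ≤ (‖∑ n ∈ Finset.Ioc a (a + 2 ^ K), g n‖₊ : ℝ≥0∞)
            + (‖∑ n ∈ Finset.Ioc (a + 2 ^ K) (a + j), g n‖₊ : ℝ≥0∞) := by
        rw [← hsplit]
        exact_mod_cast nnnorm_add_le _ _
      have hfirst : (‖∑ n ∈ Finset.Ioc a (a + 2 ^ K), g n‖₊ : ℝ≥0∞)
          ≤ ⨆ i : ℕ, (‖∑ n ∈ Finset.Ioc (i * 2 ^ K) ((i + 1) * 2 ^ K), g n‖₊ : ℝ≥0∞) := by
        have : Finset.Ioc a (a + 2 ^ K) = Finset.Ioc ((2*m) * 2 ^ K) ((2*m + 1) * 2 ^ K) := by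
          congr 1 <;> (simp only [ha]; ring)
        rw [this]
        exact le_iSup (fun i : ℕ => (‖∑ n ∈ Finset.Ioc (i * 2 ^ K) ((i + 1) * 2 ^ K), g n‖₊ : ℝ≥0∞)) (2*m)
      have hsecond : (‖∑ n ∈ Finset.Ioc (a + 2 ^ K) (a + j), g n‖₊ : ℝ≥0∞)
          ≤ ∑ k ∈ Finset.range K, ⨆ i : ℕ,
            (‖∑ n ∈ Finset.Ioc (i * 2 ^ k) ((i + 1) * 2 ^ k), g n‖₊ : ℝ≥0∞) := by
        have h1' : 1 ≤ j - 2 ^ K := by omega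
        have h2' : j - 2 ^ K < 2 ^ K := by
          have : 2 ^ (K+1) = 2 ^ K + 2 ^ K := by ring
          omega
        have heq : Finset.Ioc (a + 2 ^ K) (a + j)
            = Finset.Ioc ((2*m+1) * 2 ^ K) ((2*m+1) * 2 ^ K + (j - 2 ^ K)) := by
          congr 1
          · simp only [ha]; ring
          · have h3 : (2*m+1) * 2 ^ K + (j - 2 ^ K) = m * 2^(K+1) + j := by
              have h4 : 2 ^ K ≤ j := le_of_lt hj
              have h5 : (2*m+1) * 2 ^ K = m * 2^(K+1) + 2^K := by ring
              omega
            rw [h3]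
        rw [heq]
        exact ih (2*m+1) (j - 2 ^ K) h1' h2'
      calc (‖∑ n ∈ Finset.Ioc a (a + j), g n‖₊ : ℝ≥0∞)
          ≤ _ + _ := htri
        _ ≤ (⨆ i : ℕ, (‖∑ n ∈ Finset.Ioc (i * 2 ^ K) ((i + 1) * 2 ^ K), g n‖₊ : ℝ≥0∞))
            + ∑ k ∈ Finset.range K, ⨆ i : ℕ,
              (‖∑ n ∈ Finset.Ioc (i * 2 ^ k) ((i + 1) * 2 ^ k), g n‖₊ : ℝ≥0∞) :=
            add_le_add hfirst hsecond
        _ = _ := by rw [add_comm, ← Finset.sum_range_succ]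

/-- Menshov–Rademacher type inequality for a finite system satisfying a Riesz-type
upper ℓ²-bound with constant c₂. -/
theorem menshov_rademacher_inequality_riesz
    {X : Type*} [MeasurableSpace X] (μ : Measure X)
    {𝕜 : Type*} [RCLike 𝕜]
    {H : Type*} [NormedAddCommGroup H] [InnerProductSpace 𝕜 H] [CompleteSpace H]
    (N : ℕ) (hN : 1 ≤ N) (ψ : ℕ → X → H) (c₂ : ℝ) (hc₂ : 0 < c₂)
    (hmem : ∀ n, 1 ≤ n → n ≤ N → MemLp (ψ n) 2 μ)
    (hriesz : ∀ b : ℕ → 𝕜,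
      (eLpNorm (fun x => ∑ n ∈ Finset.Icc 1 N, b n • ψ n x) 2 μ) ^ 2
        ≤ ENNReal.ofReal (c₂ * ∑ n ∈ Finset.Icc 1 N, ‖b n‖ ^ 2))
    (b : ℕ → 𝕜) :
    (∫⁻ x, (⨆ j ∈ Finset.Icc 1 N,
        (‖∑ n ∈ Finset.Icc 1 j, b n • ψ n x‖₊ : ℝ≥0∞)) ^ 2 ∂μ) ^ (1 / 2 : ℝ)
      ≤ ENNReal.ofReal
          (Real.sqrt c₂ * (2 + Real.logb 2 (N : ℝ)) *
            Real.sqrt (∑ n ∈ Finset.Icc 1 N, ‖b n‖ ^ 2)) := by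
  classical
  set b' : ℕ → 𝕜 := fun n => if n ∈ Finset.Icc 1 N then b n else 0 with hb'
  set D : ℕ → ℕ → X → H :=
    fun k i x => ∑ n ∈ Finset.Ioc (i * 2 ^ k) ((i + 1) * 2 ^ k), b' n • ψ n x with hD
  set M : ℕ → X → ℝ≥0∞ := fun k x => ⨆ i : ℕ, (‖D k i x‖₊ : ℝ≥0∞) with hM
  set K := Nat.clog 2 N with hK
  set B2 : ℝ := ∑ n ∈ Finset.Icc 1 N, ‖b n‖ ^ 2 with hB2
  have hB2nonneg : 0 ≤ B2 := Finset.sum_nonneg fun n _ => sq_nonneg _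
  -- measurability of blocks
  have hDsm : ∀ k i, AEStronglyMeasurable (D k i) μ := by
    intro k i
    refine Finset.aestronglyMeasurable_fun_sum _ fun n _ => ?_
    by_cases hn : n ∈ Finset.Icc 1 N
    · have := ((hmem n (Finset.mem_Icc.mp hn).1 (Finset.mem_Icc.mp hn).2).1).const_smul (b' n)
      exact this
    · have hz : b' n = 0 := by simp only [hb']; exact if_neg hn
      simp only [hz, zero_smul]
      exact aestronglyMeasurable_const
  have hMmeas : ∀ k, AEMeasurable (M k) μ := fun k =>
    AEMeasurable.iSup fun i => (hDsm k i).enorm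
  -- per block bound
  have hblock : ∀ k i, ∫⁻ x, (‖D k i x‖₊ : ℝ≥0∞) ^ (2:ℝ) ∂μ
      ≤ ENNReal.ofReal (c₂ * ∑ n ∈ Finset.Icc 1 N,
          if n ∈ Finset.Ioc (i * 2 ^ k) ((i + 1) * 2 ^ k) then ‖b n‖ ^ 2 else 0) := by
    intro k i
    have h1 := hriesz (fun n => if n ∈ Finset.Ioc (i * 2 ^ k) ((i + 1) * 2 ^ k) then b' n else 0)
    have hfun : (fun x => ∑ n ∈ Finset.Icc 1 N,
        (if n ∈ Finset.Ioc (i * 2 ^ k) ((i + 1) * 2 ^ k) then b' n else 0) • ψ n x) = D k i := by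
      funext x
      simp only [hD, ite_smul, zero_smul]
      rw [Finset.sum_ite_mem]
      refine Finset.sum_subset Finset.inter_subset_right ?_
      intro n hn hn2
      have hnn : n ∉ Finset.Icc 1 N := fun h => hn2 (Finset.mem_inter.mpr ⟨h, hn⟩)
      have hz : b' n = 0 := by simp only [hb']; exact if_neg hnn
      rw [hz, zero_smul]
    have hcoef : ∑ n ∈ Finset.Icc 1 N,
        ‖if n ∈ Finset.Ioc (i * 2 ^ k) ((i + 1) * 2 ^ k) then b' n else 0‖ ^ 2
        = ∑ n ∈ Finset.Icc 1 N,
          if n ∈ Finset.Ioc (i * 2 ^ k) ((i + 1) * 2 ^ k) then ‖b n‖ ^ 2 else 0 := by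
      refine Finset.sum_congr rfl fun n hn => ?_
      by_cases h : n ∈ Finset.Ioc (i * 2 ^ k) ((i + 1) * 2 ^ k)
      · have hbn : b' n = b n := by simp only [hb']; exact if_pos hn
        rw [if_pos h, if_pos h, hbn]
      · simp [h]
    rw [hfun, hcoef] at h1
    have he : eLpNorm (D k i) 2 μ ^ 2 = ∫⁻ x, (‖D k i x‖₊ : ℝ≥0∞) ^ (2:ℝ) ∂μ := by
      rw [eLpNorm_eq_lintegral_rpow_enorm_toReal two_ne_zero ENNReal.ofNat_ne_top]
      rw [← ENNReal.rpow_natCast _ 2, ← ENNReal.rpow_mul]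
      norm_num
      rfl
    rw [← he]
    exact h1
  -- per level bound
  have hlevel : ∀ k, ∫⁻ x, M k x ^ (2:ℝ) ∂μ ≤ ENNReal.ofReal (c₂ * B2) := by
    intro k
    have step1 : ∫⁻ x, M k x ^ (2:ℝ) ∂μ
        ≤ ∑' i, ∫⁻ x, (‖D k i x‖₊ : ℝ≥0∞) ^ (2:ℝ) ∂μ := by
      rw [← lintegral_tsum (f := fun i x => (‖D k i x‖₊ : ℝ≥0∞) ^ (2:ℝ)) (fun i => ((hDsm k i).enorm).pow_const _)]
      exact lintegral_mono fun x => mr_sq_iSup_le_tsum fun i => (‖D k i x‖₊ : ℝ≥0∞)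
    have step2 : ∑' i, ∫⁻ x, (‖D k i x‖₊ : ℝ≥0∞) ^ (2:ℝ) ∂μ
        ≤ ∑' i, ENNReal.ofReal (c₂ * ∑ n ∈ Finset.Icc 1 N,
            if n ∈ Finset.Ioc (i * 2 ^ k) ((i + 1) * 2 ^ k) then ‖b n‖ ^ 2 else 0) :=
      ENNReal.tsum_le_tsum fun i => hblock k i
    have step3 : ∑' i, ENNReal.ofReal (c₂ * ∑ n ∈ Finset.Icc 1 N,
            if n ∈ Finset.Ioc (i * 2 ^ k) ((i + 1) * 2 ^ k) then ‖b n‖ ^ 2 else 0)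
        = ENNReal.ofReal (c₂ * B2) := by
      have e1 : ∀ i : ℕ, ENNReal.ofReal (c₂ * ∑ n ∈ Finset.Icc 1 N,
            if n ∈ Finset.Ioc (i * 2 ^ k) ((i + 1) * 2 ^ k) then ‖b n‖ ^ 2 else 0)
          = ENNReal.ofReal c₂ * ∑ n ∈ Finset.Icc 1 N, ENNReal.ofReal
            (if n ∈ Finset.Ioc (i * 2 ^ k) ((i + 1) * 2 ^ k) then ‖b n‖ ^ 2 else 0) := by
        intro i
        rw [ENNReal.ofReal_mul hc₂.le, ENNReal.ofReal_sum_of_nonneg]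
        intro n _
        split <;> positivity
      simp only [e1]
      rw [ENNReal.tsum_mul_left]
      rw [Summable.tsum_finsetSum (fun n _ => ENNReal.summable)]
      have e2 : ∀ n ∈ Finset.Icc 1 N, ∑' i : ℕ, ENNReal.ofReal
            (if n ∈ Finset.Ioc (i * 2 ^ k) ((i + 1) * 2 ^ k) then ‖b n‖ ^ 2 else 0)
          = ENNReal.ofReal (‖b n‖ ^ 2) := by
        intro n hn
        have hn1 : 1 ≤ n := (Finset.mem_Icc.mp hn).1
        rw [tsum_eq_single ((n - 1) / 2 ^ k)]
        · rw [if_pos ((mr_block_mem_iff k n _ hn1).mpr rfl)]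
        · intro i hi
          rw [if_neg, ENNReal.ofReal_zero]
          exact fun h => hi ((mr_block_mem_iff k n i hn1).mp h)
      rw [Finset.sum_congr rfl e2, ← ENNReal.ofReal_sum_of_nonneg
        (fun n _ => sq_nonneg _), ← ENNReal.ofReal_mul hc₂.le]
    exact le_trans step1 (le_trans step2 (le_of_eq step3))
  -- pointwise maximal bound
  have hpoint : ∀ x, (⨆ j ∈ Finset.Icc 1 N,
      (‖∑ n ∈ Finset.Icc 1 j, b n • ψ n x‖₊ : ℝ≥0∞)) ≤ ∑ k ∈ Finset.range (K+1), M k x := by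
    intro x
    refine iSup₂_le fun j hj => ?_
    obtain ⟨hj1, hj2⟩ := Finset.mem_Icc.mp hj
    have hlt : j < 2 ^ (K+1) :=
      lt_of_le_of_lt (hj2.trans (Nat.le_pow_clog one_lt_two N))
        (Nat.pow_lt_pow_right one_lt_two (Nat.lt_succ_self K))
    have hsum : ∑ n ∈ Finset.Icc 1 j, b n • ψ n x
        = ∑ n ∈ Finset.Ioc (0 * 2 ^ (K+1)) (0 * 2 ^ (K+1) + j), b' n • ψ n x := by
      rw [Nat.zero_mul, Nat.zero_add, ← Finset.Icc_add_one_left_eq_Ioc]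
      refine Finset.sum_congr rfl fun n hn => ?_
      obtain ⟨h1, h2⟩ := Finset.mem_Icc.mp hn
      have hmem' : n ∈ Finset.Icc 1 N := Finset.mem_Icc.mpr ⟨h1, h2.trans hj2⟩
      have hbn : b' n = b n := by simp only [hb']; exact if_pos hmem'
      rw [hbn]
    rw [hsum]
    exact mr_dyadic_bound (fun n => b' n • ψ n x) (K+1) 0 j hj1 hlt
  -- pow to rpow
  have hpow : ∀ y : ℝ≥0∞, y ^ (2:ℕ) = y ^ (2:ℝ) := fun y => by
    rw [← ENNReal.rpow_natCast]; norm_num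
  -- main chain
  have hmain : (∫⁻ x, (⨆ j ∈ Finset.Icc 1 N,
        (‖∑ n ∈ Finset.Icc 1 j, b n • ψ n x‖₊ : ℝ≥0∞)) ^ (2:ℝ) ∂μ) ^ (1/2:ℝ)
      ≤ ∑ k ∈ Finset.range (K+1), (∫⁻ x, M k x ^ (2:ℝ) ∂μ) ^ (1/2:ℝ) := by
    refine le_trans ?_ (mr_minkowski μ (Finset.range (K+1)) M hMmeas)
    refine ENNReal.rpow_le_rpow ?_ (by norm_num)
    exact lintegral_mono fun x => ENNReal.rpow_le_rpow (hpoint x) (by norm_num)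
  have hKlog : ((K:ℝ) + 1) ≤ 2 + Real.logb 2 (N:ℝ) := by
    rcases eq_or_lt_of_le hN with h1 | h1
    · have hK0 : K = 0 := by rw [hK, ← h1]; exact Nat.clog_one_right 2
      rw [hK0, ← h1]
      simp [Real.logb_one]
    · have hN2 : 2 ≤ N := h1
      have hK1 : 1 ≤ K := Nat.clog_pos one_lt_two hN2
      have hlt : 2 ^ (K - 1) < N := by
        have := Nat.pow_pred_clog_lt_self (b := 2) one_lt_two (x := N) hN2
        simpa [hK, Nat.pred_eq_sub_one] using this
      have hltR : ((2:ℝ)) ^ (K - 1) < (N:ℝ) := by exact_mod_cast hlt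
      have hlog : ((K:ℝ) - 1) < Real.logb 2 (N:ℝ) := by
        have h2 : Real.logb 2 ((2:ℝ) ^ (K - 1)) < Real.logb 2 (N:ℝ) :=
          Real.logb_lt_logb (by norm_num) (by positivity) hltR
        rw [Real.logb_pow, Real.logb_self_eq_one one_lt_two] at h2
        · rw [Nat.cast_sub hK1] at h2
          simpa using h2
      linarith
  calc (∫⁻ x, (⨆ j ∈ Finset.Icc 1 N,
        (‖∑ n ∈ Finset.Icc 1 j, b n • ψ n x‖₊ : ℝ≥0∞)) ^ 2 ∂μ) ^ (1 / 2 : ℝ)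
      = (∫⁻ x, (⨆ j ∈ Finset.Icc 1 N,
        (‖∑ n ∈ Finset.Icc 1 j, b n • ψ n x‖₊ : ℝ≥0∞)) ^ (2:ℝ) ∂μ) ^ (1 / 2 : ℝ) := by
        simp only [hpow]
    _ ≤ ∑ k ∈ Finset.range (K+1), (∫⁻ x, M k x ^ (2:ℝ) ∂μ) ^ (1/2:ℝ) := hmain
    _ ≤ ∑ k ∈ Finset.range (K+1), (ENNReal.ofReal (c₂ * B2)) ^ (1/2:ℝ) :=
        Finset.sum_le_sum fun k _ => ENNReal.rpow_le_rpow (hlevel k) (by norm_num)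
    _ = ((K+1 : ℕ) : ℝ≥0∞) * (ENNReal.ofReal (c₂ * B2)) ^ (1/2:ℝ) := by
        rw [Finset.sum_const, Finset.card_range, nsmul_eq_mul]
    _ = ENNReal.ofReal (((K:ℝ)+1) * (Real.sqrt c₂ * Real.sqrt B2)) := by
        rw [ENNReal.ofReal_rpow_of_nonneg (by positivity) (by norm_num),
          ← Real.sqrt_eq_rpow, Real.sqrt_mul hc₂.le, ← ENNReal.ofReal_natCast (K+1),
          ← ENNReal.ofReal_mul (by positivity)]
        congr 1
        push_cast
        ring
    _ ≤ ENNReal.ofReal (Real.sqrt c₂ * (2 + Real.logb 2 (N : ℝ)) * Real.sqrt B2) := by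
        refine ENNReal.ofReal_le_ofReal ?_
        have h0 : 0 ≤ Real.sqrt c₂ * Real.sqrt B2 := by positivity
        calc ((K:ℝ)+1) * (Real.sqrt c₂ * Real.sqrt B2)
            ≤ (2 + Real.logb 2 (N:ℝ)) * (Real.sqrt c₂ * Real.sqrt B2) :=
              mul_le_mul_of_nonneg_right hKlog h0
          _ = Real.sqrt c₂ * (2 + Real.logb 2 (N : ℝ)) * Real.sqrt B2 := by ring
end
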